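/- arXiv:1409.4356 — 4 statements merged into one kernel-verified Lean document; each statement's English description precedes it below -/
import Mathlib

section
/- For any two fixed-point-free involutions f and g of the symmetric group S_{2n}, the disjoint cycles of the product f∘g have lengths occurring in pairs; that is, the cycle type of f∘g is of the form λλ (each part repeated an even number of times) for some partition λ of n. -/
/-- The cycle type of a permutation including its fixed points: the parts of
`Equiv.Perm.cycleType` (cycles of length `≥ 2`) together with one part `1` for
each fixed point. -/
def cycleTypeFull {α : Type*} [Fintype α] [DecidableEq α] (σ : Equiv.Perm α) : Multiset ℕ :=
  σ.cycleType + Multiset.replicate (Fintype.card α - σ.support.card) 1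

/-- A finset admitting a fixed-point-free involution has even cardinality. -/
lemma even_card_of_invol {β : Type*} [DecidableEq β] (ι : β → β) (s : Finset β)
    (h1 : ∀ a ∈ s, ι a ∈ s) (h2 : ∀ a ∈ s, ι (ι a) = a) (h3 : ∀ a ∈ s, ι a ≠ a) :
    Even s.card := by
  induction s using Finset.strongInduction with
  | _ s ih =>
    rcases s.eq_empty_or_nonempty with rfl | ⟨a, ha⟩
    · simp
    · set t := (s.erase a).erase (ι a) with ht
      have hιa : ι a ∈ s := h1 a ha
      have hne : ι a ≠ a := h3 a ha
      have hmem : ∀ b, b ∈ t ↔ b ≠ ι a ∧ b ≠ a ∧ b ∈ s := by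
        intro b
        simp [ht, Finset.mem_erase, and_assoc, and_left_comm]
      have hsub : t ⊂ s := by
        constructor
        · intro b hb; exact ((hmem b).1 hb).2.2
        · intro hcon
          exact ((hmem a).1 (hcon ha)).2.1 rfl
      have hιat : ι a ∈ s.erase a := Finset.mem_erase.2 ⟨hne, hιa⟩
      have hcard : s.card = t.card + 2 := by
        have c1 : (s.erase a).card = s.card - 1 := Finset.card_erase_of_mem ha
        have c2 : t.card = (s.erase a).card - 1 := Finset.card_erase_of_mem hιat
        have c3 : 1 ≤ s.card := Finset.card_pos.2 ⟨a, ha⟩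
        have c4 : 1 ≤ (s.erase a).card := Finset.card_pos.2 ⟨ι a, hιat⟩
        omega
      have h1' : ∀ b ∈ t, ι b ∈ t := by
        intro b hb
        obtain ⟨hb1, hb2, hb3⟩ := (hmem b).1 hb
        refine (hmem (ι b)).2 ⟨?_, ?_, h1 b hb3⟩
        · intro hcon
          have h4 : ι (ι b) = ι (ι a) := by rw [hcon]
          rw [h2 b hb3, h2 a ha] at h4
          exact hb2 h4
        · intro hcon
          have h4 : ι (ι b) = ι a := by rw [hcon]
          rw [h2 b hb3] at h4
          exact hb1 h4
      obtain ⟨k, hk⟩ := ih t hsub h1' (fun b hb => h2 b ((hmem b).1 hb).2.2)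
        (fun b hb => h3 b ((hmem b).1 hb).2.2)
      exact ⟨k + 1, by omega⟩

/-- A multiset of naturals all of whose multiplicities are even is of the form `m' + m'`. -/
lemma exists_half (m : Multiset ℕ) (h : ∀ k, Even (m.count k)) :
    ∃ m' : Multiset ℕ, m' + m' = m := by
  induction m using Multiset.strongInductionOn with
  | _ m ih =>
    rcases m.empty_or_exists_mem with rfl | ⟨a, ha⟩
    · exact ⟨0, rfl⟩
    · have hc : 2 ≤ m.count a := by
        have h1 : 1 ≤ m.count a := Multiset.one_le_count_iff_mem.2 ha
        rcases h a with ⟨k, hk⟩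
        omega
      have ha' : a ∈ m.erase a := by
        rw [← Multiset.one_le_count_iff_mem, Multiset.count_erase_self]
        omega
      set t := (m.erase a).erase a with htdef
      have hm : a ::ₘ a ::ₘ t = m := by
        rw [htdef, Multiset.cons_erase ha', Multiset.cons_erase ha]
      have htlt : t < m := by
        rw [← hm]
        calc t < a ::ₘ t := Multiset.lt_cons_self t a
          _ < a ::ₘ a ::ₘ t := Multiset.lt_cons_self _ a
      have hte : ∀ k, Even (t.count k) := by
        intro k
        have hck : m.count k = t.count k + (if k = a then 2 else 0) := by
          rw [← hm]
          by_cases hka : k = a <;> simp [hka, Multiset.count_cons]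
        rcases h k with ⟨j, hj⟩
        by_cases hka : k = a
        · rw [if_pos hka] at hck
          exact ⟨j - 1, by omega⟩
        · rw [if_neg hka] at hck
          exact ⟨j, by omega⟩
      obtain ⟨t', ht'⟩ := ih t htlt hte
      exact ⟨a ::ₘ t', by rw [Multiset.cons_add, Multiset.add_cons, ht', hm]⟩

/-- For any two fixed-point-free involutions `f` and `g` of `S_{2n}`, the cycle type of
`f * g` is of the form `λλ` for some partition `λ` of `n`. -/
theorem stmt0 (n : ℕ) (f g : Equiv.Perm (Fin (2 * n)))
    (hf2 : f * f = 1) (hg2 : g * g = 1)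
    (hf : ∀ x, f x ≠ x) (hg : ∀ x, g x ≠ x) :
    ∃ lam : Nat.Partition n, cycleTypeFull (f * g) = lam.parts + lam.parts := by
  classical
  set σ := f * g with hσ
  have finv : f⁻¹ = f := inv_eq_of_mul_eq_one_right hf2
  have hff : ∀ x, f (f x) = x := by
    intro x
    have : (f * f) x = (1 : Equiv.Perm (Fin (2 * n))) x := by rw [hf2]
    simpa using this
  have hconj : f * σ * f⁻¹ = σ⁻¹ := by
    have ginv : g⁻¹ = g := inv_eq_of_mul_eq_one_right hg2
    rw [finv, hσ, mul_inv_rev, finv, ginv]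
    calc f * (f * g) * f = (f * f) * (g * f) := by group
      _ = g * f := by rw [hf2, one_mul]
  have hσf : ∀ x, σ (f x) = f (σ⁻¹ x) := by
    intro x
    have h : σ * f = f * σ⁻¹ := by
      rw [← hconj, finv]
      calc σ * f = (f * f) * σ * f := by rw [hf2, one_mul]
        _ = f * (f * σ * f) := by group
    calc σ (f x) = (σ * f) x := rfl
      _ = (f * σ⁻¹) x := by rw [h]
      _ = f (σ⁻¹ x) := rfl
  -- evenness of the number of fixed points
  have heven1 : Even (Fintype.card (Fin (2 * n)) - σ.support.card) := by
    have hcc : Fintype.card (Fin (2 * n)) - σ.support.card = σ.supportᶜ.card := by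
      rw [Finset.card_compl]
    rw [hcc]
    refine even_card_of_invol (fun x => f x) _ ?_ ?_ ?_
    · intro a hamem
      simp only [Finset.mem_compl, Equiv.Perm.mem_support, not_not] at hamem ⊢
      have h2 : σ⁻¹ a = a := by
        conv_lhs => rw [← hamem]
        exact σ.symm_apply_apply a
      rw [hσf a, h2]
    · intro a _; exact hff a
    · intro a _; exact hf a
  -- the involution on cycles
  set ι : Equiv.Perm (Fin (2 * n)) → Equiv.Perm (Fin (2 * n)) := fun c => f * c⁻¹ * f⁻¹ with hι
  have hιmem : ∀ c ∈ σ.cycleFactorsFinset, ι c ∈ σ.cycleFactorsFinset := by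
    intro c hc
    rw [Equiv.Perm.mem_cycleFactorsFinset_iff] at hc ⊢
    obtain ⟨hcyc, hsupp⟩ := hc
    have hcinv : ∀ b ∈ c.support, c⁻¹ b = σ⁻¹ b := by
      intro b hb
      have hyb : c⁻¹ b ∈ c.support := by
        rw [← Equiv.Perm.support_inv c] at hb ⊢
        exact Equiv.Perm.apply_mem_support.2 hb
      have h5 := hsupp (c⁻¹ b) hyb
      have hb2 : σ (c⁻¹ b) = b := by rw [← h5]; exact c.apply_symm_apply b
      calc c⁻¹ b = σ⁻¹ (σ (c⁻¹ b)) := (Equiv.symm_apply_apply σ _).symm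
        _ = σ⁻¹ b := by rw [hb2]
    refine ⟨Equiv.Perm.IsCycle.conj hcyc.inv, ?_⟩
    intro a ha
    have hval : ∀ x, (ι c) x = f (c⁻¹ (f x)) := by
      intro x; simp [hι, finv, Equiv.Perm.mul_apply]
    rw [Equiv.Perm.mem_support, hval a] at ha
    have hfa : f a ∈ c.support := by
      rw [Equiv.Perm.mem_support]
      intro hcon
      apply ha
      have h6 : c⁻¹ (f a) = f a := by
        conv_lhs => rw [← hcon]
        exact Equiv.symm_apply_apply c (f a)
      rw [h6, hff]
    rw [hval a, hcinv (f a) hfa]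
    calc f (σ⁻¹ (f a)) = σ (f (f a)) := (hσf (f a)).symm
      _ = σ a := by rw [hff]
  have hιcard : ∀ c : Equiv.Perm (Fin (2 * n)), (ι c).support.card = c.support.card := by
    intro c
    have : (ι c).support = c⁻¹.support.map f.toEmbedding := Equiv.Perm.support_conj
    rw [this, Finset.card_map, Equiv.Perm.support_inv]
  have hιι : ∀ c : Equiv.Perm (Fin (2 * n)), ι (ι c) = c := by
    intro c
    simp only [hι, mul_inv_rev, inv_inv, finv]
    calc f * (f * c * f) * f = (f * f) * c * (f * f) := by group
      _ = c := by rw [hf2, one_mul, mul_one]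
  -- the heart: no cycle of σ is sent to itself
  have hιne : ∀ c ∈ σ.cycleFactorsFinset, ι c ≠ c := by
    intro c hc heq
    rw [Equiv.Perm.mem_cycleFactorsFinset_iff] at hc
    obtain ⟨hcyc, hsupp⟩ := hc
    -- from ι c = c : f * c^t * f⁻¹ = c^(-t)
    have h1 : ∀ t : ℤ, f * c ^ t * f⁻¹ = c ^ (-t) := by
      intro t
      have hbase : f * c * f⁻¹ = c⁻¹ := by
        have h0 : f * c⁻¹ * f⁻¹ = c := heq
        have hinv0 := congrArg Inv.inv h0
        simpa [mul_inv_rev, mul_assoc] using hinv0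
      have := map_zpow (MulAut.conj f) c t
      rw [MulAut.conj_apply, MulAut.conj_apply, hbase] at this
      rw [this, inv_zpow, zpow_neg]
    have h1pt : ∀ (t : ℤ) (x : Fin (2 * n)), f ((c ^ t) x) = (c ^ (-t)) (f x) := by
      intro t x
      have h2 := congrArg (fun p => p (f x)) (h1 t)
      simpa [Equiv.Perm.mul_apply, finv, hff] using h2
    obtain ⟨x, hx, -⟩ := id hcyc
    have hfx : c (f x) ≠ f x := by
      intro hcon
      have h3 : c (f x) = f (c⁻¹ x) := by
        conv_lhs => rw [← heq]
        simp [hι, finv, Equiv.Perm.mul_apply, hff]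
      rw [h3] at hcon
      have h4 : c⁻¹ x = x := f.injective hcon
      apply hx
      conv_lhs => rw [← h4]
      exact Equiv.apply_symm_apply c x
    obtain ⟨j, hj⟩ := hcyc.sameCycle hx hfx
    rcases Int.even_or_odd j with ⟨m, hm⟩ | ⟨m, hm⟩
    · -- f fixes (c^m) x
      apply hf ((c ^ m) x)
      rw [h1pt m x, ← hj, ← Equiv.Perm.mul_apply, ← zpow_add]
      congr 1
      congr 1
      omega
    · -- g fixes (c^m) x
      set y := (c ^ m) x with hy
      have hxsupp : x ∈ c.support := Equiv.Perm.mem_support.2 hx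
      have hysupp : y ∈ c.support := Equiv.Perm.zpow_apply_mem_support.2 hxsupp
      have hcy : c y = σ y := hsupp y hysupp
      have hgy : g = f * σ := by
        rw [hσ, ← mul_assoc, hf2, one_mul]
      apply hg y
      rw [hgy, Equiv.Perm.mul_apply, ← hcy]
      have hcy2 : c y = (c ^ (1 + m)) x := by
        rw [hy, ← Equiv.Perm.mul_apply]
        congr 1
        rw [zpow_one_add]
      rw [hcy2, h1pt (1 + m) x, ← hj, ← Equiv.Perm.mul_apply, ← zpow_add, hy]
      congr 1
      congr 1
      omega
  -- evenness of cycle-type multiplicities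
  have heven2 : ∀ k, Even (σ.cycleType.count k) := by
    intro k
    rw [Equiv.Perm.cycleType_def, Multiset.count_map]
    have hrw : (Multiset.filter (fun c => k = (Finset.card ∘ Equiv.Perm.support) c)
        σ.cycleFactorsFinset.1).card
        = (σ.cycleFactorsFinset.filter (fun c => k = c.support.card)).card := rfl
    rw [hrw]
    refine even_card_of_invol ι _ ?_ ?_ ?_
    · intro c hcf
      rw [Finset.mem_filter] at hcf ⊢
      exact ⟨hιmem c hcf.1, by rw [hιcard c]; exact hcf.2⟩
    · intro c _; exact hιι c
    · intro c hcf
      rw [Finset.mem_filter] at hcf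
      exact hιne c hcf.1
  -- assemble
  have hevenall : ∀ k, Even ((cycleTypeFull σ).count k) := by
    intro k
    rw [cycleTypeFull, Multiset.count_add, Multiset.count_replicate]
    split_ifs with hk1
    · exact (heven2 k).add heven1
    · simpa using heven2 k
  obtain ⟨m', hm'⟩ := exists_half _ hevenall
  have hpos : ∀ {a : ℕ}, a ∈ m' → 0 < a := by
    intro a hamem
    have : a ∈ cycleTypeFull σ := by
      rw [← hm']
      exact Multiset.mem_add.2 (Or.inl hamem)
    rw [cycleTypeFull, Multiset.mem_add] at this
    rcases this with h | h
    · exact lt_of_lt_of_le (by norm_num) (Equiv.Perm.two_le_of_mem_cycleType h)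
    · rw [Multiset.eq_of_mem_replicate h]; norm_num
  have hsum : m'.sum = n := by
    have hs : (cycleTypeFull σ).sum = 2 * n := by
      rw [cycleTypeFull, Multiset.sum_add, Equiv.Perm.sum_cycleType, Multiset.sum_replicate,
        smul_eq_mul, mul_one]
      have hle : σ.support.card ≤ Fintype.card (Fin (2 * n)) := Finset.card_le_univ _
      have hcard : Fintype.card (Fin (2 * n)) = 2 * n := Fintype.card_fin _
      omega
    have : m'.sum + m'.sum = 2 * n := by
      rw [← Multiset.sum_add, hm', hs]
    omega
  exact ⟨⟨m', hpos, hsum⟩, hm'.symm⟩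
end

section
/- For any integer a ≥ 1, the action of the operator Σ_{i≠j} (2 x_i² x_j/(x_i − x_j)) ∂/∂x_i on the power sum p_a = Σ_i x_i^a yields a Σ_{k=1}^{a} p_{a+1−k} p_k − a² p_{a+1}. -/
open MvPolynomial Finset

noncomputable section

variable {F : Type*} [Field F]

/-- The `a`-th power sum in `n` variables. -/
def psum (n a : ℕ) : MvPolynomial (Fin n) F := ∑ i : Fin n, X i ^ a

lemma geom_helper {R : Type*} [CommRing R] (x y : R) (a : ℕ) (ha : 1 ≤ a) :
    (∑ k ∈ Finset.Icc 1 a, x ^ (a + 1 - k) * y ^ k) * (x - y)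
      = x ^ (a + 1) * y - x * y ^ (a + 1) := by
  have h1 : ∑ k ∈ Finset.Icc 1 a, x ^ (a + 1 - k) * y ^ k
      = x * y * ∑ m ∈ Finset.range a, y ^ m * x ^ (a - 1 - m) := by
    rw [← Finset.Ico_add_one_right_eq_Icc, Finset.sum_Ico_eq_sum_range, Finset.mul_sum]
    refine Finset.sum_congr (by congr 1) fun m hm => ?_
    rw [Finset.mem_range] at hm
    have h2 : a + 1 - (1 + m) = (a - 1 - m) + 1 := by omega
    have h3 : (1 + m) = m + 1 := by omega
    rw [h2, h3, pow_succ, pow_succ]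
    ring
  have hg := geom_sum₂_mul y x a
  rw [h1]
  have hx : x ^ (a + 1) = x ^ a * x := by rw [pow_succ]
  have hy : y ^ (a + 1) = y ^ a * y := by rw [pow_succ]
  rw [hx, hy]
  linear_combination (-(x * y)) * hg

lemma t_symm {R : Type*} [CommSemiring R] (x y : R) (a : ℕ) :
    ∑ k ∈ Finset.Icc 1 a, x ^ (a + 1 - k) * y ^ k
      = ∑ k ∈ Finset.Icc 1 a, y ^ (a + 1 - k) * x ^ k := by
  refine Finset.sum_nbij' (fun k => a + 1 - k) (fun k => a + 1 - k) ?_ ?_ ?_ ?_ ?_ <;>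
    simp only [Finset.mem_Icc] <;> intro k hk
  · omega
  · omega
  · omega
  · omega
  · have : a + 1 - (a + 1 - k) = k := by omega
    rw [this, mul_comm]

lemma num_helper {R : Type*} [CommRing R] (x y : R) (a : ℕ) (ha : 1 ≤ a) :
    2 * x ^ 2 * y * ((a : R) * x ^ (a - 1)) - 2 * y ^ 2 * x * ((a : R) * y ^ (a - 1))
      = ((a : R) + (a : R)) * ((∑ k ∈ Finset.Icc 1 a, x ^ (a + 1 - k) * y ^ k) * (x - y)) := by
  rw [geom_helper x y a ha]
  have hx : x ^ 2 * x ^ (a - 1) = x ^ (a + 1) := by rw [← pow_add]; congr 1; omega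
  have hy : y ^ 2 * y ^ (a - 1) = y ^ (a + 1) := by rw [← pow_add]; congr 1; omega
  linear_combination 2 * (a : R) * y * hx - 2 * (a : R) * x * hy

lemma pderiv_psum (n a : ℕ) (i : Fin n) :
    pderiv i (psum n a : MvPolynomial (Fin n) F)
      = (a : MvPolynomial (Fin n) F) * X i ^ (a - 1) := by
  simp only [_root_.psum, map_sum]
  rw [Finset.sum_eq_single i]
  · rw [pderiv_pow, pderiv_X_self, mul_one]
  · intro b _ hb
    rw [pderiv_pow, pderiv_X_of_ne hb, mul_zero]
  · intro h
    exact absurd (Finset.mem_univ i) h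

lemma offdiag_helper {M : Type*} [AddCommMonoid M] {n : ℕ} (f : Fin n → Fin n → M) :
    ∑ i, ∑ j ∈ Finset.univ.erase i, f i j
      = ∑ i, ∑ j ∈ Finset.Ioi i, (f i j + f j i) := by
  have h := Finset.sum_sum_Ioi_add_eq_sum_sum_off_diag (f := fun x y : Fin n => f y x)
  simp only [Finset.compl_singleton] at h
  convert h.symm using 3

set_option maxHeartbeats 1600000 in
/-- For `a ≥ 1`, the operator `Σ_{i≠j} (2 x_i² x_j/(x_i − x_j)) ∂/∂x_i` applied to the power
sum `p_a` yields `a Σ_{k=1}^{a} p_{a+1−k} p_k − a² p_{a+1}`; the left-hand side is computed in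
the fraction field of the polynomial ring in `x_1, …, x_n`. -/
theorem stmt7 (n a : ℕ) (ha : 1 ≤ a) :
    (∑ i : Fin n, ∑ j ∈ Finset.univ.erase i,
        algebraMap (MvPolynomial (Fin n) F) (FractionRing (MvPolynomial (Fin n) F))
            (2 * X i ^ 2 * X j * pderiv i (psum n a))
          / algebraMap (MvPolynomial (Fin n) F) (FractionRing (MvPolynomial (Fin n) F))
            (X i - X j))
      = algebraMap (MvPolynomial (Fin n) F) (FractionRing (MvPolynomial (Fin n) F))
          (C (a : F) * (∑ k ∈ Finset.Icc 1 a, psum n (a + 1 - k) * psum n k)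
            - C (a : F) ^ 2 * psum n (a + 1)) := by
  classical
  set R := MvPolynomial (Fin n) F with hR
  set K := FractionRing R with hK
  set φ := algebraMap R K with hφ
  have hinj : Function.Injective φ := IsFractionRing.injective R K
  set t : Fin n → Fin n → R :=
    fun i j => ∑ k ∈ Finset.Icc 1 a, X i ^ (a + 1 - k) * X j ^ k with ht
  -- the pair identity
  have pair : ∀ {i j : Fin n}, i ≠ j →
      φ (2 * X i ^ 2 * X j * pderiv i (_root_.psum n a)) / φ (X i - X j)
        + φ (2 * X j ^ 2 * X i * pderiv j (_root_.psum n a)) / φ (X j - X i)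
      = φ ((a : R) * t i j) + φ ((a : R) * t j i) := by
    intro i j hij
    have hd : φ (X i - X j) ≠ 0 := by
      intro h
      have : (X i - X j : R) = 0 := hinj (by simpa using h)
      exact hij (X_injective (by rwa [sub_eq_zero] at this))
    have e1 : (X j - X i : R) = -(X i - X j) := by ring
    rw [e1, map_neg, div_neg, pderiv_psum, pderiv_psum, ← sub_eq_add_neg, div_sub_div_same, ← map_sub]
    have key : (2 * X i ^ 2 * X j * ((a : R) * X i ^ (a - 1))
        - 2 * X j ^ 2 * X i * ((a : R) * X j ^ (a - 1)))
        = ((a : R) * t i j + (a : R) * t j i) * (X i - X j) := by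
      have hnum := num_helper (X i : R) (X j) a ha
      have hsym : t j i = t i j := t_symm (X j : R) (X i) a
      rw [hsym, ht]
      linear_combination hnum
    rw [key, map_mul, mul_div_cancel_right₀ _ hd, map_add]
  -- the polynomial identity for the right-hand side
  have hP : (C (a : F) * (∑ k ∈ Finset.Icc 1 a, _root_.psum n (a + 1 - k) * _root_.psum n k)
        - C (a : F) ^ 2 * _root_.psum n (a + 1) : R)
      = ∑ i : Fin n, ∑ j ∈ Finset.univ.erase i, (a : R) * t j i := by
    have e : ∀ i : Fin n, ∑ j ∈ Finset.univ.erase i, t j i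
        = ∑ k ∈ Finset.Icc 1 a, (_root_.psum n (a + 1 - k) * X i ^ k - X i ^ (a + 1)) := by
      intro i
      rw [ht]
      rw [Finset.sum_comm]
      refine Finset.sum_congr rfl fun k hk => ?_
      rw [← Finset.sum_mul, Finset.sum_erase_eq_sub (Finset.mem_univ i)]
      rw [Finset.mem_Icc] at hk
      have hpow : (X i : R) ^ (a + 1 - k) * X i ^ k = X i ^ (a + 1) := by
        rw [← pow_add]; congr 1; omega
      rw [sub_mul, hpow, _root_.psum]
    simp_rw [← Finset.mul_sum, e]
    rw [Finset.sum_comm]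
    have e2 : ∀ k ∈ Finset.Icc 1 a,
        ∑ i : Fin n, (_root_.psum n (a + 1 - k) * X i ^ k - X i ^ (a + 1) : R)
          = _root_.psum n (a + 1 - k) * _root_.psum n k - _root_.psum n (a + 1) := by
      intro k _
      simp only [Finset.sum_sub_distrib, ← Finset.mul_sum, _root_.psum]
    rw [Finset.sum_congr rfl e2, Finset.sum_sub_distrib, Finset.sum_const, Nat.card_Icc]
    have hc : a + 1 - 1 = a := by omega
    rw [hc, nsmul_eq_mul, ← map_natCast (C : F →+* R) a]
    ring
  rw [hP, map_sum]
  simp_rw [map_sum]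
  rw [offdiag_helper (f := fun i j : Fin n =>
    φ (2 * X i ^ 2 * X j * pderiv i (_root_.psum n a)) / φ (X i - X j))]
  rw [offdiag_helper (f := fun i j : Fin n => φ ((a : R) * t j i))]
  refine Finset.sum_congr rfl fun i _ => Finset.sum_congr rfl fun j hj => ?_
  have hij : i ≠ j := (Finset.mem_Ioi.mp hj).ne
  rw [pair hij, add_comm]

end
end

section
/- Let λ be a partition of n+1 ≥ 2 and let c^λ_{n+1,n+1} be the connection coefficient of the class algebra of S_{n+1} counting factorizations of a fixed permutation of cycle type λ as a product of two (n+1)-cycles. Then for every index i with 1 ≤ i ≤ ℓ(λ): c^λ_{n+1,n+1} = Σ_{d=1}^{λ_i−2} c^{λ↑(λ_i−1−d,d)}_{nn} + Σ_{j≠i} λ_j c^{λ↓(λ_i,λ_j)}_{nn}. -/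
set_option linter.unusedSectionVars false
set_option linter.unusedVariables false
set_option linter.unusedTactic false
set_option linter.unreachableTactic false
set_option linter.unnecessarySimpa false
set_option maxHeartbeats 1600000

/-- The number of ordered factorizations of `σ ∈ S_m` as a product of two full `m`-cycles. -/
def cFactCount (m : ℕ) (σ : Equiv.Perm (Fin m)) : ℕ :=
  (Finset.univ.filter fun p : Equiv.Perm (Fin m) × Equiv.Perm (Fin m) =>
    cycleTypeFull p.1 = {m} ∧ cycleTypeFull p.2 = {m} ∧ p.1 * p.2 = σ).card

open Equiv Equiv.Perm List Finset

variable {α : Type*} [Fintype α] [DecidableEq α]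

def factCount' (σ : Equiv.Perm α) : ℕ :=
  (Finset.univ.filter fun p : Equiv.Perm α × Equiv.Perm α =>
    cycleTypeFull p.1 = {Fintype.card α} ∧ cycleTypeFull p.2 = {Fintype.card α}
      ∧ p.1 * p.2 = σ).card

lemma cFactCount_eq_factCount' (m : ℕ) (σ : Equiv.Perm (Fin m)) :
    cFactCount m σ = factCount' σ := by
  simp [cFactCount, factCount']

-- H1
lemma formPerm_cons' (x : α) {l : List α} (hl : l ≠ []) :
    List.formPerm (x :: l) = Equiv.swap x (l.head hl) * List.formPerm l := by
  obtain ⟨y, t, rfl⟩ := List.exists_cons_of_ne_nil hl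
  simp [List.formPerm_cons_cons]

-- H2
lemma formPerm_concat (x : α) {l : List α} (hl : l ≠ []) (hnd : (x :: l).Nodup) :
    List.formPerm (l ++ [x]) = List.formPerm l * Equiv.swap x (l.getLast hl) := by
  have h1 : (l ++ [x]).reverse = x :: l.reverse := by simp
  have h2 : l.reverse ≠ [] := by simpa using hl
  have h3 : List.formPerm ((l ++ [x]).reverse) = (List.formPerm (l ++ [x]))⁻¹ :=
    List.formPerm_reverse _
  rw [h1, formPerm_cons' x h2, List.formPerm_reverse] at h3
  have h4 : l.reverse.head h2 = l.getLast hl := by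
    rw [← List.getLast_reverse (by simpa using hl)]; simp
  rw [h4] at h3
  have := congrArg (·⁻¹) h3
  simp only [mul_inv_rev, inv_inv, Equiv.swap_inv] at this
  rw [this]

-- KEYCOMM
lemma formPerm_cons_mul_swap {x y : α} (t : List α) (hxy : x ≠ y)
    (hx : x ∉ t) (hy : y ∉ t) (hnd : t.Nodup) :
    List.formPerm (x :: t) * Equiv.swap x y = Equiv.swap x y * List.formPerm (y :: t) := by
  rcases t with _ | ⟨h, t⟩
  · simp
  · have hth : x ≠ h := fun hh => hx (hh ▸ List.mem_cons_self)
    have hyh : y ≠ h := fun hh => hy (hh ▸ List.mem_cons_self)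
    rw [List.formPerm_cons_cons, List.formPerm_cons_cons]
    have key : Equiv.swap x h * Equiv.swap x y = Equiv.swap x y * Equiv.swap y h := by
      have h1 := Equiv.swap_mul_swap_mul_swap (x := h) (y := x) (z := y) hth.symm hyh.symm
      rw [Equiv.swap_comm h x] at h1
      calc Equiv.swap x h * Equiv.swap x y
          = Equiv.swap x y * (Equiv.swap x y * Equiv.swap x h * Equiv.swap x y) := by
            rw [← mul_assoc, ← mul_assoc, Equiv.swap_mul_self, one_mul]
        _ = Equiv.swap x y * Equiv.swap y h := by rw [h1]
    have comm : List.formPerm (h :: t) * Equiv.swap x y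
        = Equiv.swap x y * List.formPerm (h :: t) := by
      refine ((Equiv.Perm.Disjoint.commute ?_)).symm
      intro z
      by_cases hz : z ∈ (h :: t)
      · left
        rw [Equiv.swap_apply_of_ne_of_ne] <;> rintro rfl <;> [exact hx hz; exact hy hz]
      · right; exact List.formPerm_apply_of_notMem hz
    calc Equiv.swap x h * List.formPerm (h :: t) * Equiv.swap x y
        = Equiv.swap x h * (List.formPerm (h :: t) * Equiv.swap x y) := by rw [mul_assoc]
      _ = Equiv.swap x h * Equiv.swap x y * List.formPerm (h :: t) := by
          rw [comm, mul_assoc]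
      _ = Equiv.swap x y * Equiv.swap y h * List.formPerm (h :: t) := by rw [key]
      _ = Equiv.swap x y * (Equiv.swap y h * List.formPerm (h :: t)) := by rw [mul_assoc]

-- MASTER
lemma formPerm_cons_append (t : List α) :
    ∀ (b : List α) (x : α), (x :: (b ++ t)).Nodup →
    List.formPerm (x :: (b ++ t)) = List.formPerm (x :: t) * List.formPerm (x :: b) := by
  intro b
  induction b with
  | nil => intro x _; simp
  | cons y b ih =>
    intro x hnd
    have hnd' : (y :: (b ++ t)).Nodup := hnd.of_cons
    have hxy : x ≠ y := by
      have := hnd.notMem (l := (y :: b) ++ t); simp at this; tauto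
    have hx : x ∉ t := by have := hnd.notMem (l := (y :: b) ++ t); simp at this; tauto
    have hy : y ∉ t := by
      have := hnd'.notMem (l := b ++ t); simp at this; tauto
    have ht : t.Nodup := (List.nodup_append'.mp hnd'.of_cons).2.1
    calc List.formPerm (x :: (y :: b) ++ t)
        = Equiv.swap x y * List.formPerm (y :: (b ++ t)) := by
          rw [show (x :: (y :: b) ++ t) = x :: y :: (b ++ t) by simp,
            List.formPerm_cons_cons]
      _ = Equiv.swap x y * (List.formPerm (y :: t) * List.formPerm (y :: b)) := by
          rw [ih y hnd']
      _ = (Equiv.swap x y * List.formPerm (y :: t)) * List.formPerm (y :: b) := by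
          rw [mul_assoc]
      _ = (List.formPerm (x :: t) * Equiv.swap x y) * List.formPerm (y :: b) := by
          rw [formPerm_cons_mul_swap t hxy hx hy ht]
      _ = List.formPerm (x :: t) * List.formPerm (x :: y :: b) := by
          rw [mul_assoc, List.formPerm_cons_cons]

lemma cycleTypeFull_eq_sum (σ : Equiv.Perm α) :
    cycleTypeFull σ = σ.cycleType + Multiset.replicate (Fintype.card α - σ.cycleType.sum) 1 := by
  rw [cycleTypeFull, Equiv.Perm.sum_cycleType]

-- CTF-POS
lemma ctf_pos_aux (N : ℕ) (s : Multiset ℕ) (h1 : ∀ a ∈ s, 1 ≤ a) (h2 : s.sum ≤ N) :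
    s.filter (2 ≤ ·) + Multiset.replicate (N - (s.filter (2 ≤ ·)).sum) 1
      = s + Multiset.replicate (N - s.sum) 1 := by
  induction s using Multiset.induction generalizing N with
  | empty => simp
  | cons a s ih =>
    have ha : 1 ≤ a := h1 a (Multiset.mem_cons_self _ _)
    have hsum : a + s.sum ≤ N := by rwa [Multiset.sum_cons] at h2
    have hfil : (s.filter (2 ≤ ·)).sum ≤ s.sum := by
      conv_rhs => rw [← Multiset.filter_add_not (2 ≤ ·) s]
      rw [Multiset.sum_add]
      exact Nat.le_add_right _ _
    by_cases h2a : 2 ≤ a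
    · rw [Multiset.filter_cons_of_pos _ h2a, Multiset.sum_cons, Multiset.cons_add,
        Multiset.sum_cons]
      rw [show N - (a + (s.filter (2 ≤ ·)).sum) = (N - a) - (s.filter (2 ≤ ·)).sum by omega,
        show N - (a + s.sum) = (N - a) - s.sum by omega]
      rw [ih (N - a) (fun b hb => h1 b (Multiset.mem_cons_of_mem hb)) (by omega),
        Multiset.cons_add]
    · have ha1 : a = 1 := by omega
      subst ha1
      rw [Multiset.filter_cons_of_neg _ h2a, Multiset.sum_cons]
      rw [show N - (s.filter (2 ≤ ·)).sum = ((N - 1) - (s.filter (2 ≤ ·)).sum) + 1 by omega,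
        Multiset.replicate_succ, Multiset.add_cons,
        ih (N - 1) (fun b hb => h1 b (Multiset.mem_cons_of_mem hb)) (by omega),
        Multiset.cons_add, show N - (1 + s.sum) = (N - 1) - s.sum by omega]

-- permceptual disjointness from list disjointness
lemma formPerm_disjoint_of_list_disjoint {l₁ l₂ : List α} (h : l₁.Disjoint l₂) :
    Equiv.Perm.Disjoint l₁.formPerm l₂.formPerm := by
  intro z
  by_cases hz : z ∈ l₁
  · right; exact List.formPerm_apply_of_notMem (fun hh => h hz hh)
  · left; exact List.formPerm_apply_of_notMem hz

lemma prod_formPerm_fix {x : α} (L : List (List α)) (hx : ∀ b ∈ L, x ∉ b) :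
    (L.map List.formPerm).prod x = x := by
  induction L with
  | nil => rfl
  | cons b L ih =>
    simp only [List.map_cons, List.prod_cons, Equiv.Perm.mul_apply]
    rw [ih (fun b hb => hx b (List.mem_cons_of_mem _ hb)),
      List.formPerm_apply_of_notMem (hx b (List.mem_cons_self))]

lemma cycleType_prod_blocks (L : List (List α)) (hnd : ∀ b ∈ L, b.Nodup)
    (hdisj : L.Pairwise List.Disjoint) (hne : ∀ b ∈ L, b ≠ []) :
    (L.map List.formPerm).prod.cycleType
      = ((L.map List.length).filter (2 ≤ ·) : List ℕ) := by
  induction L with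
  | nil => simp
  | cons b L ih =>
    have hd : Equiv.Perm.Disjoint b.formPerm (L.map List.formPerm).prod := by
      refine Equiv.Perm.disjoint_prod_right _ ?_
      intro g hg
      obtain ⟨c, hc, rfl⟩ := List.mem_map.mp hg
      exact formPerm_disjoint_of_list_disjoint
        (List.rel_of_pairwise_cons hdisj hc)
    simp only [List.map_cons, List.prod_cons]
    rw [Equiv.Perm.Disjoint.cycleType_mul hd, ih (fun c hc => hnd c (List.mem_cons_of_mem _ hc))
      hdisj.of_cons (fun c hc => hne c (List.mem_cons_of_mem _ hc))]
    by_cases h2 : 2 ≤ b.length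
    · rw [(List.isCycle_formPerm (hnd b (List.mem_cons_self)) h2).cycleType,
        List.support_formPerm_of_nodup b (hnd b (List.mem_cons_self))
          (fun y hy => by subst hy; simp at h2),
        List.toFinset_card_of_nodup (hnd b (List.mem_cons_self))]
      rw [List.filter_cons_of_pos (by simpa using h2)]
      simp
    · have hb1 : b.length = 1 := by
        have := hne b (List.mem_cons_self)
        have : 0 < b.length := List.length_pos_iff.mpr this
        omega
      obtain ⟨y, rfl⟩ := List.length_eq_one_iff.mp hb1
      rw [List.formPerm_singleton, Equiv.Perm.cycleType_one]
      rw [List.filter_cons_of_neg (by simpa using by omega)]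
      simp

-- PRODTYPE
lemma cycleTypeFull_prod_blocks (L : List (List α)) (hnd : L.flatten.Nodup)
    (hne : ∀ b ∈ L, b ≠ []) :
    cycleTypeFull (L.map List.formPerm).prod
      = ((L.map List.length : List ℕ) : Multiset ℕ)
        + Multiset.replicate (Fintype.card α - (L.map List.length).sum) 1 := by
  obtain ⟨hnd', hdisj⟩ := List.nodup_flatten.mp hnd
  rw [cycleTypeFull_eq_sum, cycleType_prod_blocks L hnd' hdisj hne]
  have hsum : ((L.map List.length : List ℕ) : Multiset ℕ).sum ≤ Fintype.card α := by
    rw [Multiset.sum_coe, ← List.length_flatten]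
    exact hnd.length_le_card
  have h1 : ∀ a ∈ ((L.map List.length : List ℕ) : Multiset ℕ), 1 ≤ a := by
    intro a ha
    rw [Multiset.mem_coe, List.mem_map] at ha
    obtain ⟨b, hb, rfl⟩ := ha
    exact List.length_pos_iff.mpr (hne b hb)
  have key := ctf_pos_aux (Fintype.card α) (L.map List.length : List ℕ) h1 hsum
  have e1 : (((L.map List.length : List ℕ) : Multiset ℕ).filter (2 ≤ ·))
      = ((List.filter (fun x => decide (2 ≤ x)) (L.map List.length) : List ℕ) : Multiset ℕ) := by
    simp [Multiset.filter_coe]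
  rw [e1] at key
  rw [key]
  congr 2

lemma cycleTypeFull_inv (σ : Equiv.Perm α) : cycleTypeFull σ⁻¹ = cycleTypeFull σ := by
  rw [cycleTypeFull_eq_sum, cycleTypeFull_eq_sum, Equiv.Perm.cycleType_inv]

-- restriction and extension
def restr (x : α) (π : Equiv.Perm α) (h : π x = x) : Equiv.Perm {y : α // y ≠ x} :=
  π.subtypePerm (fun y => by
    constructor
    · intro hy hc
      exact hy (by rw [hc, h])
    · intro hy hc
      exact hy (π.injective (by rw [hc, h])))

def extPerm (x : α) (τ : Equiv.Perm {y : α // y ≠ x}) : Equiv.Perm α :=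
  τ.extendDomain (Equiv.refl _)

lemma extPerm_apply_of_ne (x : α) (τ : Equiv.Perm {y : α // y ≠ x}) {y : α} (hy : y ≠ x) :
    extPerm x τ y = ↑(τ ⟨y, hy⟩) :=
  (Equiv.Perm.extendDomain_apply_subtype τ (Equiv.refl _) hy).trans rfl

lemma extPerm_apply_self (x : α) (τ : Equiv.Perm {y : α // y ≠ x}) :
    extPerm x τ x = x := by
  rw [extPerm, Equiv.Perm.extendDomain_apply_not_subtype]
  simp

lemma extPerm_restr (x : α) (π : Equiv.Perm α) (h : π x = x) :
    extPerm x (restr x π h) = π := by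
  ext y
  by_cases hy : y = x
  · subst hy; rw [extPerm_apply_self, h]
  · rw [extPerm_apply_of_ne x _ hy]; rfl

lemma restr_extPerm (x : α) (τ : Equiv.Perm {y : α // y ≠ x}) (h : extPerm x τ x = x) :
    restr x (extPerm x τ) h = τ := by
  ext y
  have h1 : ((restr x (extPerm x τ) h y : {y : α // y ≠ x}) : α) = extPerm x τ ↑y := rfl
  rw [h1, extPerm_apply_of_ne x τ y.2, Subtype.coe_eta]

lemma extPerm_mul (x : α) (u v : Equiv.Perm {y : α // y ≠ x}) :
    extPerm x (u * v) = extPerm x u * extPerm x v := by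
  rw [extPerm, extPerm, extPerm, Equiv.Perm.extendDomain_mul]

lemma extPerm_inv (x : α) (u : Equiv.Perm {y : α // y ≠ x}) :
    extPerm x u⁻¹ = (extPerm x u)⁻¹ := by
  rw [extPerm, extPerm, Equiv.Perm.extendDomain_inv]

lemma extPerm_injective (x : α) : Function.Injective (extPerm x) := by
  intro u v h
  ext y
  have h1 := congrArg (fun π : Equiv.Perm α => π (y : α)) h
  simp only [extPerm_apply_of_ne x u y.2, extPerm_apply_of_ne x v y.2, Subtype.coe_eta] at h1
  exact h1

lemma card_compl_subtype (x : α) :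
    Fintype.card {y : α // y ≠ x} = Fintype.card α - 1 := by
  have h1 : Fintype.card {y : α // ¬ y = x} = Fintype.card α - Fintype.card {y : α // y = x} :=
    Fintype.card_subtype_compl _
  simpa [Fintype.card_subtype_eq] using h1

lemma cycleType_restr (x : α) (π : Equiv.Perm α) (h : π x = x) :
    (restr x π h).cycleType = π.cycleType := by
  conv_rhs => rw [← extPerm_restr x π h]
  rw [extPerm, Equiv.Perm.cycleType_extendDomain]

-- R(i)
lemma cycleTypeFull_of_fixed (x : α) (π : Equiv.Perm α) (h : π x = x) :
    cycleTypeFull π = 1 ::ₘ cycleTypeFull (restr x π h) := by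
  rw [cycleTypeFull_eq_sum, cycleTypeFull_eq_sum, cycleType_restr, card_compl_subtype]
  have hs : π.cycleType.sum ≤ Fintype.card α - 1 := by
    have h2 : (restr x π h).cycleType.sum = (restr x π h).support.card :=
      Equiv.Perm.sum_cycleType _
    rw [cycleType_restr] at h2
    rw [h2]
    calc (restr x π h).support.card ≤ Fintype.card {y : α // y ≠ x} := Finset.card_le_univ _
      _ = Fintype.card α - 1 := card_compl_subtype x
  have hpos : 0 < Fintype.card α := Fintype.card_pos_iff.mpr ⟨x⟩
  rw [show Fintype.card α - π.cycleType.sum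
      = ((Fintype.card α - 1) - π.cycleType.sum) + 1 by omega]
  rw [Multiset.replicate_succ, Multiset.add_cons]

-- FC lemmas
lemma isFC_intro {π : Equiv.Perm α} (h1 : π.IsCycle) (h2 : π.support = Finset.univ) :
    cycleTypeFull π = {Fintype.card α} := by
  rw [cycleTypeFull, h1.cycleType, h2]
  simp

lemma isFC_elim {π : Equiv.Perm α} (h : cycleTypeFull π = {Fintype.card α})
    (hN : 2 ≤ Fintype.card α) : π.IsCycle ∧ π.support = Finset.univ := by
  have hcard := congrArg Multiset.card h
  rw [cycleTypeFull, Multiset.card_add, Multiset.card_replicate, Multiset.card_singleton] at hcard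
  have hsupp : π.support.card ≤ Fintype.card α := Finset.card_le_univ _
  by_cases hct : Multiset.card π.cycleType = 0
  · exfalso
    have hπ : π = 1 := Equiv.Perm.card_cycleType_eq_zero.mp hct
    subst hπ
    rw [cycleTypeFull, Equiv.Perm.cycleType_one, Equiv.Perm.support_one] at h
    simp only [Finset.card_empty, Nat.sub_zero, zero_add] at h
    have := congrArg Multiset.card h
    rw [Multiset.card_replicate, Multiset.card_singleton] at this
    have : Fintype.card α = 1 := this
    omega
  · have h1 : Multiset.card π.cycleType = 1 := by omega
    have hcy : π.IsCycle := Equiv.Perm.card_cycleType_eq_one.mp h1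
    have h2 : Fintype.card α - π.support.card = 0 := by omega
    have h3 : π.support.card = Fintype.card α := by omega
    exact ⟨hcy, Finset.eq_univ_of_card _ h3⟩

-- DEL
lemma del_lemma {π : Equiv.Perm α} {x z : α} (hfc : cycleTypeFull π = {Fintype.card α})
    (hx : π x = z) (hz : z ≠ x) (h : (Equiv.swap x z * π) x = x) :
    cycleTypeFull (restr x (Equiv.swap x z * π) h) = {Fintype.card α - 1} := by
  have hN : 2 ≤ Fintype.card α := by
    rw [Nat.succ_le_iff, Fintype.one_lt_card_iff]; exact ⟨z, x, hz⟩
  obtain ⟨hcy, hsupp⟩ := isFC_elim hfc hN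
  have hπx : π x ≠ x := by rw [hx]; exact hz
  set L := π.toList x with hL
  have hfpL : L.formPerm = π := by
    rw [hL, Equiv.Perm.formPerm_toList, hcy.cycleOf_eq hπx]
  have hlen : L.length = Fintype.card α := by
    rw [hL, Equiv.Perm.length_toList, hcy.cycleOf_eq hπx, hsupp, Finset.card_univ]
  have hLne : L ≠ [] := by
    intro hc; rw [hc] at hlen; simp at hlen; omega
  have hnd : L.Nodup := Equiv.Perm.nodup_toList _ _
  have hxmem : x ∈ π.support := by rwa [Equiv.Perm.mem_support]
  have hhead : L.head hLne = x := by
    rw [List.head_eq_getElem]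
    have := Equiv.Perm.toList_getElem_zero π x hxmem
    simpa [hL] using this
  have hcons : x :: L.tail = L := by
    conv_rhs => rw [← List.cons_head_tail hLne]
    rw [hhead]
  have htne : L.tail ≠ [] := by
    intro hc
    have : L.length = 1 := by rw [← hcons, hc]; simp
    omega
  have hxt : x ∉ L.tail := by
    intro hc
    have := hnd
    rw [← hcons] at this
    exact (List.nodup_cons.mp this).1 hc
  have hstep : Equiv.swap x z * π = L.tail.formPerm := by
    have e1 : L.formPerm = Equiv.swap x (L.tail.head htne) * L.tail.formPerm := by
      conv_lhs => rw [← hcons]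
      exact formPerm_cons' x htne
    have e2 : L.tail.head htne = z := by
      have h5 := congrArg (fun f : Equiv.Perm α => f x) e1
      simp only [hfpL, Equiv.Perm.mul_apply] at h5
      rw [List.formPerm_apply_of_notMem hxt, Equiv.swap_apply_left, hx] at h5
      exact h5.symm
    rw [← hfpL, e1, e2, ← mul_assoc, Equiv.swap_mul_self, one_mul]
  have hctf : cycleTypeFull (Equiv.swap x z * π)
      = {Fintype.card α - 1} + Multiset.replicate 1 1 := by
    rw [hstep]
    have := cycleTypeFull_prod_blocks [L.tail] (by simpa using (hcons ▸ hnd).of_cons)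
      (by simpa using htne)
    simp only [List.map_cons, List.map_nil, List.prod_cons, List.prod_nil, mul_one] at this
    rw [this]
    have hlt : L.tail.length = Fintype.card α - 1 := by
      have : L.length = L.tail.length + 1 := by rw [← hcons]; simp
      omega
    rw [hlt, show Fintype.card α - ([Fintype.card α - 1] : List ℕ).sum = 1 by simp; omega,
      Multiset.coe_singleton]
  rw [cycleTypeFull_of_fixed x _ h] at hctf
  have h7 : {Fintype.card α - 1} + Multiset.replicate 1 1
      = 1 ::ₘ ({Fintype.card α - 1} : Multiset ℕ) := by
    rw [Multiset.replicate_one, add_comm, Multiset.singleton_add]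
  rw [h7] at hctf
  exact (Multiset.cons_inj_right _).mp hctf

-- INS
lemma ins_lemma {x z : α} (hz : z ≠ x) (τ : Equiv.Perm {y : α // y ≠ x})
    (hτ : cycleTypeFull τ = {Fintype.card α - 1}) :
    cycleTypeFull (Equiv.swap x z * extPerm x τ) = {Fintype.card α}
      ∧ (Equiv.swap x z * extPerm x τ) x = z := by
  have hN : 2 ≤ Fintype.card α := by
    rw [Nat.succ_le_iff, Fintype.one_lt_card_iff]; exact ⟨z, x, hz⟩
  have hax : (Equiv.swap x z * extPerm x τ) x = z := by
    rw [Equiv.Perm.mul_apply, extPerm_apply_self, Equiv.swap_apply_left]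
  refine ⟨?_, hax⟩
  have hcardS : Fintype.card {y : α // y ≠ x} = Fintype.card α - 1 := card_compl_subtype x
  by_cases h2 : Fintype.card α = 2
  · -- τ = 1, swap x z is the full cycle
    have hsub : Subsingleton {y : α // y ≠ x} := by
      rw [← Fintype.card_le_one_iff_subsingleton, hcardS, h2]
    have hτ1 : τ = 1 := Subsingleton.elim _ _
    rw [hτ1, extPerm, Equiv.Perm.extendDomain_one, mul_one]
    refine isFC_intro (Equiv.Perm.isCycle_swap hz.symm) ?_
    apply Finset.eq_univ_of_card
    rw [Equiv.Perm.support_swap hz.symm, h2]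
    rw [Finset.card_insert_of_notMem (by simpa using hz.symm), Finset.card_singleton]
  · have hN3 : 3 ≤ Fintype.card α := by omega
    have hS2 : 2 ≤ Fintype.card {y : α // y ≠ x} := by omega
    obtain ⟨hcy, hsupp⟩ := isFC_elim (by rw [hτ, hcardS]) hS2
    set cτ := extPerm x τ with hcτ
    have hcyc : cτ.IsCycle := Equiv.Perm.IsCycle.extendDomain _ hcy
    have hczz : cτ z ≠ z := by
      rw [hcτ, extPerm_apply_of_ne x τ hz]
      intro hc
      have : τ ⟨z, hz⟩ = ⟨z, hz⟩ := Subtype.ext hc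
      have hmem : (⟨z, hz⟩ : {y : α // y ≠ x}) ∈ τ.support := hsupp ▸ Finset.mem_univ _
      rw [Equiv.Perm.mem_support] at hmem
      exact hmem this
    set L := cτ.toList z with hL
    have hfpL : L.formPerm = cτ := by
      rw [hL, Equiv.Perm.formPerm_toList, hcyc.cycleOf_eq hczz]
    have hlen : L.length = Fintype.card α - 1 := by
      rw [hL, Equiv.Perm.length_toList, hcyc.cycleOf_eq hczz]
      have e1 : cτ.cycleType.sum = cτ.support.card := Equiv.Perm.sum_cycleType _
      have e2 : cτ.cycleType = τ.cycleType := Equiv.Perm.cycleType_extendDomain _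
      have e3 : τ.cycleType.sum = τ.support.card := Equiv.Perm.sum_cycleType _
      have e4 : τ.support.card = Fintype.card α - 1 := by
        rw [hsupp, Finset.card_univ, hcardS]
      have e5 : cτ.cycleType.sum = τ.cycleType.sum := by rw [e2]
      omega
    have hnd : L.Nodup := Equiv.Perm.nodup_toList _ _
    have hzmem : z ∈ cτ.support := by rwa [Equiv.Perm.mem_support]
    have hLne : L ≠ [] := by
      intro hc; rw [hc] at hlen; simp at hlen; omega
    have hhead : L.head hLne = z := by
      rw [List.head_eq_getElem]
      have := Equiv.Perm.toList_getElem_zero cτ z hzmem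
      simpa [hL] using this
    have hxL : x ∉ L := by
      intro hc
      rw [hL, Equiv.Perm.mem_toList_iff] at hc
      obtain ⟨⟨i, hi⟩, _⟩ := hc
      have : x ∈ cτ.support := by
        rw [← hi]; rwa [Equiv.Perm.zpow_apply_mem_support]
      rw [Equiv.Perm.mem_support] at this
      exact this (extPerm_apply_self x τ)
    have hstep : Equiv.swap x z * cτ = (x :: L).formPerm := by
      rw [formPerm_cons' x hLne, hhead, hfpL]
    rw [hstep]
    have := cycleTypeFull_prod_blocks [x :: L]
      (by simp only [List.flatten_cons, List.flatten_nil, List.append_nil]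
          exact List.nodup_cons.mpr ⟨hxL, hnd⟩)
      (by simp)
    simp only [List.map_cons, List.map_nil, List.prod_cons, List.prod_nil, mul_one] at this
    rw [this]
    have hlx : (x :: L).length = Fintype.card α := by
      simp [hlen]; omega
    rw [hlx, show Fintype.card α - ([Fintype.card α] : List ℕ).sum = 0 by simp,
      Multiset.replicate_zero, add_zero, Multiset.coe_singleton]

-- transport
lemma cycleType_permCongr {β : Type*} [Fintype β] [DecidableEq β] (e : α ≃ β)
    (w : Equiv.Perm α) : (e.permCongr w).cycleType = w.cycleType := by
  have hfe : e.permCongr w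
      = w.extendDomain (e.trans (Equiv.subtypeUnivEquiv (fun _ : β => trivial)).symm) := by
    ext b
    rw [Equiv.Perm.extendDomain_apply_subtype _ _ trivial]
    simp [Equiv.subtypeUnivEquiv]
  rw [hfe, Equiv.Perm.cycleType_extendDomain]

lemma cycleTypeFull_permCongr {β : Type*} [Fintype β] [DecidableEq β] (e : α ≃ β)
    (w : Equiv.Perm α) : cycleTypeFull (e.permCongr w) = cycleTypeFull w := by
  rw [cycleTypeFull_eq_sum, cycleTypeFull_eq_sum, cycleType_permCongr,
    Fintype.card_congr e]

lemma permCongr_mul {β : Type*} [DecidableEq β] (e : α ≃ β) (u v : Equiv.Perm α) :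
    e.permCongr (u * v) = e.permCongr u * e.permCongr v := by
  ext b; simp

lemma factCount'_permCongr {β : Type*} [Fintype β] [DecidableEq β] (e : α ≃ β)
    (w : Equiv.Perm α) : factCount' (e.permCongr w) = factCount' w := by
  rw [factCount', factCount']
  apply Finset.card_bij'
    (i := fun p _ => (e.symm.permCongr p.1, e.symm.permCongr p.2))
    (j := fun p _ => (e.permCongr p.1, e.permCongr p.2))
  · intro p hp
    simp only [Finset.mem_filter, Finset.mem_univ, true_and] at hp ⊢
    obtain ⟨h1, h2, h3⟩ := hp
    refine ⟨?_, ?_, ?_⟩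
    · rw [cycleTypeFull_permCongr, h1, Fintype.card_congr e]
    · rw [cycleTypeFull_permCongr, h2, Fintype.card_congr e]
    · rw [← permCongr_mul, h3]
      ext a; simp
  · intro p hp
    simp only [Finset.mem_filter, Finset.mem_univ, true_and] at hp ⊢
    obtain ⟨h1, h2, h3⟩ := hp
    refine ⟨?_, ?_, ?_⟩
    · rw [cycleTypeFull_permCongr, h1, Fintype.card_congr e]
    · rw [cycleTypeFull_permCongr, h2, Fintype.card_congr e]
    · rw [← permCongr_mul, h3]
  · intro p hp
    ext a <;> simp
  · intro p hp
    ext a <;> simp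

lemma restr_congr {x : α} {π π' : Equiv.Perm α} (h : π = π') {h1 : π x = x} {h2 : π' x = x} :
    restr x π h1 = restr x π' h2 := by subst h; rfl

lemma restr_mul {x : α} (π π' : Equiv.Perm α) (h1 : π x = x) (h2 : π' x = x)
    (h3 : (π * π') x = x) : restr x π h1 * restr x π' h2 = restr x (π * π') h3 := by
  ext y; rfl

lemma restr_inv {x : α} (π : Equiv.Perm α) (h1 : π x = x) (h2 : π⁻¹ x = x) :
    (restr x π h1)⁻¹ = restr x π⁻¹ h2 := by
  ext y
  simp only [restr]
  rfl

-- BIJ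
lemma bij_lemma (σ : Equiv.Perm α) (x z w : α) (hz : z ≠ x) (hw : w ≠ x)
    (hγ : (Equiv.swap x z * σ * Equiv.swap w x) x = x) :
    (Finset.univ.filter fun p : Equiv.Perm α × Equiv.Perm α =>
       cycleTypeFull p.1 = {Fintype.card α} ∧ cycleTypeFull p.2 = {Fintype.card α}
       ∧ p.1 * p.2 = σ ∧ p.1 x = z).card
    = factCount' (restr x (Equiv.swap x z * σ * Equiv.swap w x) hγ) := by
  have hσw : σ w = z := by
    have h0 : Equiv.swap x z (σ (Equiv.swap w x x)) = x := hγ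
    rw [Equiv.swap_apply_right] at h0
    have := congrArg (Equiv.swap x z) h0
    rwa [Equiv.swap_apply_self, Equiv.swap_apply_left] at this
  have memfix1 : ∀ p : Equiv.Perm α × Equiv.Perm α, p.1 x = z →
      (Equiv.swap x z * p.1) x = x := by
    intro p h4
    rw [Equiv.Perm.mul_apply, h4, Equiv.swap_apply_right]
  have key2 : ∀ p : Equiv.Perm α × Equiv.Perm α, p.1 * p.2 = σ → p.1 x = z →
      p.2 w = x := by
    intro p h3 h4
    apply p.1.injective
    have : p.1 (p.2 w) = σ w := by rw [← Equiv.Perm.mul_apply, h3]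
    rw [this, hσw, h4]
  have memfix2 : ∀ p : Equiv.Perm α × Equiv.Perm α, p.2 w = x →
      (p.2 * Equiv.swap w x) x = x := by
    intro p h2w
    rw [Equiv.Perm.mul_apply, Equiv.swap_apply_right, h2w]
  rw [factCount']
  refine Finset.card_bij'
    (fun p hp => (restr x (Equiv.swap x z * p.1)
        (memfix1 p (Finset.mem_filter.mp hp).2.2.2.2),
      restr x (p.2 * Equiv.swap w x)
        (memfix2 p (key2 p (Finset.mem_filter.mp hp).2.2.2.1
          (Finset.mem_filter.mp hp).2.2.2.2))))
    (fun q hq => (Equiv.swap x z * extPerm x q.1, extPerm x q.2 * Equiv.swap w x))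
    ?_ ?_ ?_ ?_
  · -- i maps into target
    intro p hp
    obtain ⟨-, h1, h2, h3, h4⟩ := Finset.mem_filter.mp hp
    have h2w : p.2 w = x := key2 p h3 h4
    simp only [Finset.mem_filter, Finset.mem_univ, true_and]
    refine ⟨?_, ?_, ?_⟩
    · rw [card_compl_subtype]
      exact del_lemma h1 h4 hz _
    · rw [card_compl_subtype]
      have hinv : (p.2 * Equiv.swap w x)⁻¹ = Equiv.swap x w * p.2⁻¹ := by
        rw [mul_inv_rev, Equiv.swap_inv, Equiv.swap_comm]
      have hfc2 : cycleTypeFull p.2⁻¹ = {Fintype.card α} := by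
        rw [cycleTypeFull_inv, h2]
      have hp2x : p.2⁻¹ x = w := by
        rw [← h2w]; simp
      have hfix : (Equiv.swap x w * p.2⁻¹) x = x := by
        rw [Equiv.Perm.mul_apply, hp2x, Equiv.swap_apply_right]
      have hdel := del_lemma hfc2 hp2x hw hfix
      have hfixB : (p.2 * Equiv.swap w x) x = x := memfix2 p h2w
      have hfix2 : (p.2 * Equiv.swap w x)⁻¹ x = x := by
        rw [hinv]; exact hfix
      have hkey : (restr x (p.2 * Equiv.swap w x) hfixB)⁻¹
          = restr x (Equiv.swap x w * p.2⁻¹) hfix := by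
        rw [restr_inv _ _ hfix2]
        exact restr_congr hinv
      calc cycleTypeFull (restr x (p.2 * Equiv.swap w x) hfixB)
          = cycleTypeFull (restr x (p.2 * Equiv.swap w x) hfixB)⁻¹ :=
            (cycleTypeFull_inv _).symm
        _ = {Fintype.card α - 1} := by rw [hkey]; exact hdel
    · have hprod : Equiv.swap x z * p.1 * (p.2 * Equiv.swap w x)
          = Equiv.swap x z * σ * Equiv.swap w x := by
        rw [← h3]; group
      exact (restr_mul _ _ _ _ (by rw [hprod]; exact hγ)).trans (restr_congr hprod)
  · -- j maps into source
    intro q hq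
    obtain ⟨-, h1, h2, h3⟩ := Finset.mem_filter.mp hq
    rw [card_compl_subtype] at h1 h2
    simp only [Finset.mem_filter, Finset.mem_univ, true_and]
    have hins1 := ins_lemma hz q.1 h1
    refine ⟨hins1.1, ?_, ?_, hins1.2⟩
    · have hfc2 : cycleTypeFull q.2⁻¹ = {Fintype.card α - 1} := by
        rw [cycleTypeFull_inv, h2]
      have hins2 := ins_lemma hw q.2⁻¹ hfc2
      have hinv : (extPerm x q.2 * Equiv.swap w x)⁻¹
          = Equiv.swap x w * extPerm x q.2⁻¹ := by
        rw [mul_inv_rev, Equiv.swap_inv, Equiv.swap_comm, extPerm_inv]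
      calc cycleTypeFull (extPerm x q.2 * Equiv.swap w x)
          = cycleTypeFull (extPerm x q.2 * Equiv.swap w x)⁻¹ := (cycleTypeFull_inv _).symm
        _ = {Fintype.card α} := by rw [hinv]; exact hins2.1
    · have hext : extPerm x (q.1 * q.2) = Equiv.swap x z * σ * Equiv.swap w x := by
        rw [h3, extPerm_restr]
      calc Equiv.swap x z * extPerm x q.1 * (extPerm x q.2 * Equiv.swap w x)
          = Equiv.swap x z * (extPerm x q.1 * extPerm x q.2) * Equiv.swap w x := by group
        _ = Equiv.swap x z * extPerm x (q.1 * q.2) * Equiv.swap w x := by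
            rw [extPerm_mul]
        _ = Equiv.swap x z * (Equiv.swap x z * σ * Equiv.swap w x) * Equiv.swap w x := by
            rw [hext]
        _ = σ := by
            rw [show Equiv.swap x z * (Equiv.swap x z * σ * Equiv.swap w x) * Equiv.swap w x
              = (Equiv.swap x z * Equiv.swap x z) * σ * (Equiv.swap w x * Equiv.swap w x) by
                group]
            rw [Equiv.swap_mul_self, Equiv.swap_mul_self, one_mul, mul_one]
  · -- j ∘ i = id
    intro p hp
    obtain ⟨-, h1, h2, h3, h4⟩ := Finset.mem_filter.mp hp
    rw [Prod.ext_iff]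
    refine ⟨?_, ?_⟩
    · show Equiv.swap x z * extPerm x (restr x (Equiv.swap x z * p.1) (memfix1 p h4)) = p.1
      rw [extPerm_restr, ← mul_assoc, Equiv.swap_mul_self, one_mul]
    · show extPerm x (restr x (p.2 * Equiv.swap w x) (memfix2 p (key2 p h3 h4)))
        * Equiv.swap w x = p.2
      rw [extPerm_restr, mul_assoc, Equiv.swap_mul_self, mul_one]
  · -- i ∘ j = id
    intro q hq
    rw [Prod.ext_iff]
    refine ⟨?_, ?_⟩
    · have he : Equiv.swap x z * (Equiv.swap x z * extPerm x q.1) = extPerm x q.1 := by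
        rw [← mul_assoc, Equiv.swap_mul_self, one_mul]
      have hfix : (Equiv.swap x z * (Equiv.swap x z * extPerm x q.1)) x = x := by
        rw [he]; exact extPerm_apply_self _ _
      show restr x (Equiv.swap x z * (Equiv.swap x z * extPerm x q.1)) hfix = q.1
      rw [restr_congr (h2 := extPerm_apply_self x q.1) he]
      exact restr_extPerm _ _ _
    · have he : extPerm x q.2 * Equiv.swap w x * Equiv.swap w x = extPerm x q.2 := by
        rw [mul_assoc, Equiv.swap_mul_self, mul_one]
      have hfix : (extPerm x q.2 * Equiv.swap w x * Equiv.swap w x) x = x := by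
        rw [he]; exact extPerm_apply_self _ _
      show restr x (extPerm x q.2 * Equiv.swap w x * Equiv.swap w x) hfix = q.2
      rw [restr_congr (h2 := extPerm_apply_self x q.2) he]
      exact restr_extPerm _ _ _

def chop {β : Type*} : List ℕ → List β → List (List β)
  | [], _ => []
  | s :: ss, l => l.take s :: chop ss (l.drop s)

lemma chop_map_length {β : Type*} :
    ∀ (P : List ℕ) (l : List β), P.sum ≤ l.length → (chop P l).map List.length = P := by
  intro P
  induction P with
  | nil => intro l _; rfl
  | cons s ss ih =>
    intro l h
    rw [List.sum_cons] at h
    simp only [chop, List.map_cons]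
    rw [ih (l.drop s) (by simp; omega), List.length_take]
    congr 1
    omega

lemma chop_flatten {β : Type*} :
    ∀ (P : List ℕ) (l : List β), P.sum = l.length → (chop P l).flatten = l := by
  intro P
  induction P with
  | nil =>
    intro l h
    rw [List.sum_nil] at h
    simp [chop, (List.length_eq_zero_iff.mp h.symm)]
  | cons s ss ih =>
    intro l h
    rw [List.sum_cons] at h
    simp only [chop, List.flatten_cons]
    rw [ih (l.drop s) (by simp; omega), List.take_append_drop]

lemma sum_flatten_toFinset {β : Type*} [DecidableEq β] {M : Type*} [AddCommMonoid M]
    (g : β → M) : ∀ (R : List (List β)), R.flatten.Nodup →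
    ∑ z ∈ R.flatten.toFinset, g z = (R.map (fun b => ∑ z ∈ b.toFinset, g z)).sum := by
  intro R
  induction R with
  | nil => simp
  | cons b R ih =>
    intro h
    rw [List.flatten_cons] at h
    obtain ⟨h1, h2, h3⟩ := List.nodup_append'.mp h
    simp only [List.flatten_cons, List.map_cons, List.sum_cons, List.toFinset_append]
    rw [Finset.sum_union (List.disjoint_toFinset_iff_disjoint.mpr h3), ih h2]

-- helper: swap commutes with perms fixing both points
lemma swap_commute_fix {α : Type*} [Fintype α] [DecidableEq α] (w x : α) (ρ : Equiv.Perm α)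
    (hw : ρ w = w) (hx : ρ x = x) : ρ * Equiv.swap w x = Equiv.swap w x * ρ := by
  refine (Equiv.Perm.Disjoint.commute ?_)
  intro y
  by_cases h1 : y = w
  · left; rw [h1, hw]
  · by_cases h2 : y = x
    · left; rw [h2, hx]
    · right; exact Equiv.swap_apply_of_ne_of_ne h1 h2

-- FIBER EVAL
lemma fiber_eval (c : (m : ℕ) → Multiset ℕ → ℕ)
    (hc : ∀ (m : ℕ) (σ : Equiv.Perm (Fin m)), c m (cycleTypeFull σ) = cFactCount m σ)
    (n : ℕ) (σ : Equiv.Perm (Fin (n+1))) (x z w : Fin (n+1)) (hz : z ≠ x) (hw : w ≠ x)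
    (hγ : (Equiv.swap x z * σ * Equiv.swap w x) x = x) (M : Multiset ℕ)
    (hM : cycleTypeFull (Equiv.swap x z * σ * Equiv.swap w x) = 1 ::ₘ M) :
    (Finset.univ.filter fun p : Equiv.Perm (Fin (n+1)) × Equiv.Perm (Fin (n+1)) =>
       cycleTypeFull p.1 = {Fintype.card (Fin (n+1))}
       ∧ cycleTypeFull p.2 = {Fintype.card (Fin (n+1))}
       ∧ p.1 * p.2 = σ ∧ p.1 x = z).card
    = c n M := by
  rw [bij_lemma σ x z w hz hw hγ]
  have hrestr : cycleTypeFull (restr x (Equiv.swap x z * σ * Equiv.swap w x) hγ) = M := by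
    have h1 := cycleTypeFull_of_fixed x _ hγ
    rw [hM] at h1
    exact ((Multiset.cons_inj_right _).mp h1).symm
  have e : {y : Fin (n+1) // y ≠ x} ≃ Fin n :=
    Fintype.equivFinOfCardEq (by rw [card_compl_subtype]; simp)
  calc factCount' (restr x (Equiv.swap x z * σ * Equiv.swap w x) hγ)
      = factCount' (e.permCongr (restr x (Equiv.swap x z * σ * Equiv.swap w x) hγ)) :=
        (factCount'_permCongr e _).symm
    _ = cFactCount n (e.permCongr (restr x (Equiv.swap x z * σ * Equiv.swap w x) hγ)) :=
        (cFactCount_eq_factCount' n _).symm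
    _ = c n (cycleTypeFull (e.permCongr (restr x (Equiv.swap x z * σ * Equiv.swap w x) hγ))) :=
        (hc n _).symm
    _ = c n M := by rw [cycleTypeFull_permCongr, hrestr]

/-- Recurrence for the class algebra connection coefficients `c^λ_{n+1,n+1}`:
for any function `c` assigning to each cycle type the number of factorizations of a
permutation of that type as a product of two full cycles (such a function is well
defined since the count only depends on the conjugacy class), and any part `k` of a
partition `λ` of `n+1`,
`c^λ_{n+1,n+1} = Σ_{d=1}^{k−2} c^{λ↑(k−1−d,d)}_{nn} + Σ_{j≠i} λ_j c^{λ↓(k,λ_j)}_{nn}`. -/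
theorem stmt12 (c : (m : ℕ) → Multiset ℕ → ℕ)
    (hc : ∀ (m : ℕ) (σ : Equiv.Perm (Fin m)), c m (cycleTypeFull σ) = cFactCount m σ)
    (n : ℕ) (hn : 1 ≤ n) (lam : Nat.Partition (n + 1)) (k : ℕ) (hk : k ∈ lam.parts) :
    c (n + 1) lam.parts
      = (∑ d ∈ Finset.Icc 1 (k - 2), c n ((k - 1 - d) ::ₘ d ::ₘ lam.parts.erase k))
        + ((lam.parts.erase k).map fun m =>
            m * c n ((k + m - 1) ::ₘ (lam.parts.erase k).erase m)).sum := by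
  classical
  have hkpos : 0 < k := lam.parts_pos hk
  set E := lam.parts.erase k with hE
  have hconsE : k ::ₘ E = lam.parts := Multiset.cons_erase hk
  have hEsum : k + E.sum = n + 1 := by
    have h1 : (k ::ₘ E).sum = n + 1 := by rw [hconsE, lam.parts_sum]
    rwa [Multiset.sum_cons] at h1
  have hEpos : ∀ m ∈ E, 0 < m := fun m hm => lam.parts_pos (Multiset.mem_of_mem_erase hm)
  set P : List ℕ := k :: E.toList with hP
  have hPsum : P.sum = n + 1 := by
    rw [hP, List.sum_cons, Multiset.sum_toList]; exact hEsum
  set l0 := List.finRange (n+1) with hl0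
  set blocks := chop P l0 with hblocksdef
  have hflat : blocks.flatten = l0 := chop_flatten _ _ (by rw [hPsum, hl0, List.length_finRange])
  have hndflat : blocks.flatten.Nodup := by rw [hflat, hl0]; exact List.nodup_finRange _
  have hlens : blocks.map List.length = P :=
    chop_map_length _ _ (by rw [hPsum, hl0, List.length_finRange])
  set K : List (Fin (n+1)) := l0.take k with hKdef
  set T : List (List (Fin (n+1))) := chop E.toList (l0.drop k) with hTdef
  have hblocks : blocks = K :: T := rfl
  have hne : ∀ b ∈ blocks, b ≠ [] := by
    intro b hb hbnil
    have h0 : (0:ℕ) ∈ P := by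
      rw [← hlens]
      exact List.mem_map.mpr ⟨b, hb, by rw [hbnil]; rfl⟩
    rw [hP] at h0
    rcases List.mem_cons.mp h0 with h | h
    · omega
    · have := hEpos 0 (by rwa [← Multiset.mem_toList]); omega
  set σ : Equiv.Perm (Fin (n+1)) := (blocks.map List.formPerm).prod with hσdef
  have hσtype : cycleTypeFull σ = lam.parts := by
    rw [hσdef, cycleTypeFull_prod_blocks blocks hndflat hne, hlens, hPsum, Fintype.card_fin,
      Nat.sub_self, Multiset.replicate_zero, add_zero, hP]
    rw [show ((k :: E.toList : List ℕ) : Multiset ℕ) = k ::ₘ (E.toList : Multiset ℕ) from rfl]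
    rw [Multiset.coe_toList, hconsE]
  have hkle : k ≤ n + 1 := by omega
  have hKlen : K.length = k := by
    rw [hKdef, List.length_take, hl0, List.length_finRange]; omega
  have hKne : K ≠ [] := by
    intro hcon; rw [hcon] at hKlen; simp at hKlen; omega
  set x := K.head hKne with hxdef
  have hKx : x :: K.tail = K := List.cons_head_tail _
  set t : List (Fin (n+1)) := K.tail with htdef
  have htlen : t.length = k - 1 := by
    have h9 := congrArg List.length hKx
    simp only [List.length_cons] at h9
    omega
  have hndKT : (K ++ T.flatten).Nodup := by
    have h9 : blocks.flatten = K ++ T.flatten := by rw [hblocks, List.flatten_cons]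
    rwa [h9] at hndflat
  have hKnd : K.Nodup := (List.nodup_append'.mp hndKT).1
  have hTnd : T.flatten.Nodup := (List.nodup_append'.mp hndKT).2.1
  have hdisjKT : K.Disjoint T.flatten := (List.nodup_append'.mp hndKT).2.2
  have hxK : x ∈ K := List.head_mem hKne
  have hxTf : x ∉ T.flatten := fun hcon => hdisjKT hxK hcon
  have hxt : x ∉ t := by
    have h9 := hKnd; rw [← hKx] at h9; exact (List.nodup_cons.mp h9).1
  set ρ : Equiv.Perm (Fin (n+1)) := (T.map List.formPerm).prod with hρdef
  have hσKρ : σ = K.formPerm * ρ := by rw [hσdef, hblocks]; simp [hρdef]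
  have hρfix : ∀ y : Fin (n+1), y ∉ T.flatten → ρ y = y := by
    intro y hy
    exact prod_formPerm_fix T (fun b hb hyb => hy (List.mem_flatten.mpr ⟨b, hb, hyb⟩))
  have hρx : ρ x = x := hρfix x hxTf
  have hσxt : ∀ (htne : t ≠ []), σ x = t.head htne := by
    intro htne
    rw [hσKρ, Equiv.Perm.mul_apply, hρx, ← hKx, formPerm_cons' x htne,
      Equiv.Perm.mul_apply, List.formPerm_apply_of_notMem hxt, Equiv.swap_apply_left]
  have hσx1 : t = [] → σ x = x := by
    intro hcon
    rw [hσKρ, Equiv.Perm.mul_apply, hρx, ← hKx, hcon]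
    simp
  have hcard : Fintype.card (Fin (n+1)) = n + 1 := Fintype.card_fin _
  have hN2 : 2 ≤ Fintype.card (Fin (n+1)) := by omega
  set h : Fin (n+1) → ℕ := fun z =>
    (Finset.univ.filter fun p : Equiv.Perm (Fin (n+1)) × Equiv.Perm (Fin (n+1)) =>
       cycleTypeFull p.1 = {Fintype.card (Fin (n+1))}
       ∧ cycleTypeFull p.2 = {Fintype.card (Fin (n+1))}
       ∧ p.1 * p.2 = σ ∧ p.1 x = z).card with hhdef
  have hLHS : c (n+1) lam.parts = ∑ z ∈ Finset.univ, h z := by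
    rw [← hσtype, hc, cFactCount_eq_factCount', factCount']
    rw [Finset.card_eq_sum_card_fiberwise (f := fun p => p.1 x) (t := Finset.univ)
      (fun p _ => Finset.mem_univ _)]
    refine Finset.sum_congr rfl ?_
    intro z _
    rw [hhdef]
    rw [Finset.filter_filter]
    congr 1
    apply Finset.filter_congr
    intro p _
    constructor
    · rintro ⟨⟨a1, a2, a3⟩, a4⟩; exact ⟨a1, a2, a3, a4⟩
    · rintro ⟨a1, a2, a3, a4⟩; exact ⟨⟨a1, a2, a3⟩, a4⟩
  have hempty : ∀ z : Fin (n+1), (z = x ∨ z = σ x) → h z = 0 := by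
    intro z hzc
    rw [hhdef]
    rw [Finset.card_eq_zero, Finset.filter_eq_empty_iff]
    rintro p - ⟨h1, h2, h3, h4⟩
    obtain ⟨hcy1, hs1⟩ := isFC_elim h1 hN2
    obtain ⟨hcy2, hs2⟩ := isFC_elim h2 hN2
    have hm1 : p.1 x ≠ x := by
      have h9 : x ∈ p.1.support := hs1 ▸ Finset.mem_univ x
      rwa [Equiv.Perm.mem_support] at h9
    have hm2 : p.2 x ≠ x := by
      have h9 : x ∈ p.2.support := hs2 ▸ Finset.mem_univ x
      rwa [Equiv.Perm.mem_support] at h9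
    rcases hzc with rfl | hzs
    · exact hm1 h4
    · apply hm2
      apply p.1.injective
      rw [← Equiv.Perm.mul_apply, h3, h4, hzs]
  set A : Finset (Fin (n+1)) := K.toFinset \ {x, σ x} with hAdef
  set B : Finset (Fin (n+1)) := Finset.univ \ K.toFinset with hBdef
  have hAB : Disjoint A B := by
    rw [Finset.disjoint_left]
    intro a haA haB
    rw [hAdef, Finset.mem_sdiff] at haA
    rw [hBdef, Finset.mem_sdiff] at haB
    exact haB.2 haA.1
  have hsum_AB : ∑ z ∈ Finset.univ, h z = ∑ z ∈ A, h z + ∑ z ∈ B, h z := by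
    rw [← Finset.sum_union hAB]
    symm
    apply Finset.sum_subset (Finset.subset_univ _)
    intro z _ hzAB
    rw [Finset.mem_union] at hzAB
    push_neg at hzAB
    obtain ⟨hzA, hzB⟩ := hzAB
    rw [hBdef, Finset.mem_sdiff] at hzB
    push_neg at hzB
    have hzK : z ∈ K.toFinset := hzB (Finset.mem_univ z)
    rw [hAdef, Finset.mem_sdiff] at hzA
    push_neg at hzA
    have hz2 : z ∈ ({x, σ x} : Finset (Fin (n+1))) := hzA hzK
    rw [Finset.mem_insert, Finset.mem_singleton] at hz2
    exact hempty z hz2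
  set f : ℕ → Fin (n+1) := fun d => t.getD d x with hfdef
  have htnd : t.Nodup := by
    have h9 := hKnd; rw [← hKx] at h9; exact (List.nodup_cons.mp h9).2
  have hAimage : A = Finset.image f (Finset.Icc 1 (k-2)) := by
    ext z
    rw [hAdef, Finset.mem_sdiff, Finset.mem_image]
    constructor
    · rintro ⟨hzK, hzxs⟩
      rw [Finset.mem_insert, Finset.mem_singleton] at hzxs
      push_neg at hzxs
      obtain ⟨hzx, hzσx⟩ := hzxs
      rw [List.mem_toFinset, ← hKx, List.mem_cons] at hzK
      rcases hzK with rfl | hzt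
      · exact absurd rfl hzx
      · have htne : t ≠ [] := List.ne_nil_of_mem hzt
        have hk2 : 2 ≤ k := by
          have := List.length_pos_iff.mpr htne; omega
        obtain ⟨i, hi, hti⟩ := List.mem_iff_getElem.mp hzt
        have hi0 : i ≠ 0 := by
          rintro rfl
          apply hzσx
          rw [hσxt htne, List.head_eq_getElem, hti]
        refine ⟨i, Finset.mem_Icc.mpr ⟨by omega, by omega⟩, ?_⟩
        rw [hfdef]
        simp only []
        rw [List.getD_eq_getElem t x hi, hti]
    · rintro ⟨d, hd, rfl⟩
      rw [Finset.mem_Icc] at hd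
      have hk3 : 3 ≤ k := by omega
      have hdlt : d < t.length := by omega
      have hfd : f d = t[d] := by rw [hfdef]; simp only []; rw [List.getD_eq_getElem t x hdlt]
      have htne : t ≠ [] := by
        intro hcon; rw [hcon] at htlen; simp at htlen; omega
      constructor
      · rw [List.mem_toFinset, ← hKx, List.mem_cons, hfd]
        exact Or.inr (List.getElem_mem _)
      · rw [Finset.mem_insert, Finset.mem_singleton, hfd]
        push_neg
        constructor
        · intro hcon; apply hxt; rw [← hcon]; exact List.getElem_mem _
        · rw [hσxt htne, List.head_eq_getElem]
          intro hcon
          rw [htnd.getElem_inj_iff] at hcon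
          omega
  have hinj : ∀ d1 ∈ Finset.Icc 1 (k-2), ∀ d2 ∈ Finset.Icc 1 (k-2), f d1 = f d2 → d1 = d2 := by
    intro d1 hd1 d2 hd2 heq
    rw [Finset.mem_Icc] at hd1 hd2
    have h1lt : d1 < t.length := by omega
    have h2lt : d2 < t.length := by omega
    rw [hfdef] at heq
    simp only [] at heq
    rw [List.getD_eq_getElem t x h1lt, List.getD_eq_getElem t x h2lt,
      htnd.getElem_inj_iff] at heq
    exact heq
  have hTlens : T.map List.length = E.toList := by
    have h9 : blocks.map List.length = K.length :: T.map List.length := by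
      rw [hblocks, List.map_cons]
    rw [h9, hP] at hlens
    exact (List.cons.injEq _ _ _ _ ▸ hlens :
      K.length = k ∧ T.map List.length = E.toList).2
  have hsplit : ∀ d ∈ Finset.Icc 1 (k-2), h (f d) = c n ((k - 1 - d) ::ₘ d ::ₘ E) := by
    intro d hd
    rw [Finset.mem_Icc] at hd
    have hk3 : 3 ≤ k := by omega
    have hdlt : d < t.length := by omega
    set a := t.take d with hadef
    set z := t[d] with hzdef
    set b2 := t.drop (d+1) with hb2def
    have htsplit : t = a ++ z :: b2 := by
      conv_lhs => rw [← List.take_append_drop d t]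
      rw [hadef]
      congr 1
      rw [List.drop_eq_getElem_cons hdlt]
    have halen : a.length = d := by rw [hadef, List.length_take]; omega
    have hane : a ≠ [] := by
      intro hcon; rw [hcon] at halen; simp at halen; omega
    set w := a.getLast hane with hwdef
    have hzt : z ∈ t := List.getElem_mem _
    have hwa : w ∈ a := List.getLast_mem hane
    have hwt : w ∈ t := by rw [htsplit]; exact List.mem_append_left _ hwa
    have hzx : z ≠ x := fun hcon => hxt (hcon ▸ hzt)
    have hwx : w ≠ x := fun hcon => hxt (hcon ▸ hwt)
    have hfd : f d = z := by
      rw [hfdef]; simp only []; rw [List.getD_eq_getElem t x hdlt]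
    have hKnd' : (x :: (a ++ z :: b2)).Nodup := by rw [← htsplit, hKx]; exact hKnd
    have hxa : x ∉ a := fun hcon => hxt (by rw [htsplit]; exact List.mem_append_left _ hcon)
    have hand : a.Nodup := (List.nodup_append'.mp hKnd'.of_cons).1
    have hxa_nd : (x :: a).Nodup := List.nodup_cons.mpr ⟨hxa, hand⟩
    have hxzb2 : x ∉ (z :: b2) := fun hcon =>
      hxt (by rw [htsplit]; exact List.mem_append_right _ hcon)
    have hwK : w ∈ K := by rw [← hKx]; exact List.mem_cons_of_mem _ hwt
    have hρw : ρ w = w := hρfix w (fun hcon => hdisjKT hwK hcon)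
    have hcomm : ρ * Equiv.swap w x = Equiv.swap w x * ρ := swap_commute_fix w x ρ hρw hρx
    have hKform : K.formPerm
        = List.formPerm (x :: z :: b2) * List.formPerm (x :: a) := by
      rw [← hKx, htsplit]
      exact formPerm_cons_append (z :: b2) a x hKnd'
    have hfxa : List.formPerm (x :: a) = List.formPerm a * Equiv.swap x w := by
      have hrot : (x :: a).rotate 1 = a ++ [x] := by
        rw [List.rotate_cons_succ, List.rotate_zero]
      have h1 : List.formPerm (a ++ [x]) = List.formPerm (x :: a) := by
        rw [← hrot, List.formPerm_rotate_one _ hxa_nd]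
      rw [← h1, formPerm_concat x hane hxa_nd, hwdef]
    have hγeq : Equiv.swap x z * σ * Equiv.swap w x
        = List.formPerm (z :: b2) * (List.formPerm a * ρ) := by
      calc Equiv.swap x z * σ * Equiv.swap w x
          = Equiv.swap x z * (List.formPerm (x :: z :: b2) * List.formPerm (x :: a) * ρ)
              * Equiv.swap w x := by rw [hσKρ, hKform]
        _ = List.formPerm (z :: b2) * (List.formPerm a * ρ) := by
            rw [List.formPerm_cons_cons, hfxa]
            simp only [mul_assoc]
            rw [hcomm]
            rw [show Equiv.swap x w * (Equiv.swap w x * ρ) = ρ by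
              rw [← mul_assoc, Equiv.swap_comm x w, Equiv.swap_mul_self, one_mul]]
            rw [← mul_assoc (Equiv.swap x z) (Equiv.swap x z), Equiv.swap_mul_self, one_mul]
    have hγx : (Equiv.swap x z * σ * Equiv.swap w x) x = x := by
      rw [hγeq, Equiv.Perm.mul_apply, Equiv.Perm.mul_apply, hρx,
        List.formPerm_apply_of_notMem hxa, List.formPerm_apply_of_notMem hxzb2]
    have hctfγ : cycleTypeFull (Equiv.swap x z * σ * Equiv.swap w x)
        = 1 ::ₘ ((k - 1 - d) ::ₘ d ::ₘ E) := by
      rw [hγeq]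
      have hflat' : ((z :: b2) :: a :: T).flatten.Nodup := by
        have hsrc : (t ++ T.flatten).Nodup := by
          have h9 : ((x :: t) ++ T.flatten).Nodup := by rwa [hKx]
          rw [List.cons_append] at h9
          exact h9.of_cons
        have hperm : ((z :: b2) :: a :: T).flatten ~ t ++ T.flatten := by
          rw [List.flatten_cons, List.flatten_cons, htsplit, ← List.append_assoc]
          exact (List.perm_append_comm).append_right _
        exact (List.Perm.nodup_iff hperm).mpr hsrc
      have hne' : ∀ b ∈ (z :: b2) :: a :: T, b ≠ [] := by
        intro b hb
        rcases List.mem_cons.mp hb with rfl | hb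
        · simp
        rcases List.mem_cons.mp hb with rfl | hb
        · exact hane
        · exact hne b (by rw [hblocks]; exact List.mem_cons_of_mem _ hb)
      have hct := cycleTypeFull_prod_blocks ((z :: b2) :: a :: T) hflat' hne'
      simp only [List.map_cons, List.prod_cons] at hct
      rw [← hρdef] at hct
      rw [hct]
      have hlz : (z :: b2).length = k - 1 - d := by
        rw [hb2def]
        simp only [List.length_cons, List.length_drop]
        omega
      have hEtsum : E.toList.sum = n + 1 - k := by
        rw [Multiset.sum_toList]; omega
      rw [hlz, halen, hTlens]
      rw [show ((((k - 1 - d) :: d :: E.toList : List ℕ)) : Multiset ℕ)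
          = (k - 1 - d) ::ₘ d ::ₘ (E.toList : Multiset ℕ) from rfl, Multiset.coe_toList]
      rw [show ((k - 1 - d) :: d :: E.toList : List ℕ).sum = (k - 1 - d) + (d + E.toList.sum)
        from rfl, hEtsum, Fintype.card_fin]
      rw [show n + 1 - (k - 1 - d + (d + (n + 1 - k))) = 1 by omega]
      rw [Multiset.replicate_one, add_comm, Multiset.singleton_add]
    rw [hfd, hhdef]
    exact fiber_eval c hc n σ x z w hzx hwx hγx _ hctfγ
  have hAsum : ∑ z ∈ A, h z = ∑ d ∈ Finset.Icc 1 (k-2), c n ((k - 1 - d) ::ₘ d ::ₘ E) := by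
    rw [hAimage, Finset.sum_image hinj]
    exact Finset.sum_congr rfl hsplit
  have hBflatten : B = T.flatten.toFinset := by
    ext z
    simp only [hBdef, Finset.mem_sdiff, List.mem_toFinset, Finset.mem_univ, true_and]
    constructor
    · intro hzK
      have hz0 : z ∈ blocks.flatten := by rw [hflat, hl0]; exact List.mem_finRange z
      rw [hblocks, List.flatten_cons, List.mem_append] at hz0
      tauto
    · intro hzT hzK
      exact hdisjKT hzK hzT
  have hperz : ∀ b ∈ T, ∀ z ∈ b,
      h z = c n ((k + b.length - 1) ::ₘ E.erase b.length) := by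
    intro b hbT z hzb
    set m := b.length with hmdef
    obtain ⟨L₁, L₂, hT⟩ := List.append_of_mem hbT
    obtain ⟨i, hilt, hbi⟩ := List.mem_iff_getElem.mp hzb
    set b' := b.rotate i with hb'def
    have hbnd : b.Nodup := (List.nodup_flatten.mp hTnd).1 b hbT
    have hb'perm : b' ~ b := List.rotate_perm b i
    have hb'nd : b'.Nodup := (hb'perm.nodup_iff).mpr hbnd
    have hb'len : b'.length = m := List.length_rotate b i
    have hbne : b ≠ [] := hne b (by rw [hblocks]; exact List.mem_cons_of_mem _ hbT)
    have hmpos : 0 < m := List.length_pos_iff.mpr hbne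
    have hb'ne : b' ≠ [] := by
      intro hcon; rw [hcon] at hb'len; simp at hb'len; omega
    have hb'eq : b' = z :: (b.drop (i+1) ++ b.take i) := by
      rw [hb'def, List.rotate_eq_drop_append_take (Nat.le_of_lt hilt),
        List.drop_eq_getElem_cons hilt, hbi, List.cons_append]
    set b2 := b.drop (i+1) ++ b.take i with hb2def
    have hb'cons : z :: b2 = b' := hb'eq.symm
    have hzb' : z ∈ b' := (hb'perm.mem_iff).mpr hzb
    set w := b'.getLast hb'ne with hwdef
    have hwb : w ∈ b := (hb'perm.mem_iff).mp (List.getLast_mem hb'ne)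
    have hbfT : ∀ y, y ∈ b → y ∈ T.flatten := fun y hy => List.mem_flatten.mpr ⟨b, hbT, hy⟩
    have hzx : z ≠ x := fun hcon => hxTf (hcon ▸ hbfT z hzb)
    have hwx : w ≠ x := fun hcon => hxTf (hcon ▸ hbfT w hwb)
    have hxb' : x ∉ b' := fun hcon => hxTf (hbfT x ((hb'perm.mem_iff).mp hcon))
    set ρ' : Equiv.Perm (Fin (n+1)) := ((L₁ ++ L₂).map List.formPerm).prod with hρ'def
    have hTpd : List.Pairwise List.Disjoint T := (List.nodup_flatten.mp hTnd).2
    have hcommP : List.Pairwise Commute (T.map List.formPerm) := by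
      refine List.Pairwise.map _ ?_ hTpd
      intro c1 c2 hdisj
      exact (formPerm_disjoint_of_list_disjoint hdisj).commute
    have hρsplit : ρ = b.formPerm * ρ' := by
      rw [hρdef, hρ'def]
      have hpm : T.map List.formPerm
          ~ b.formPerm :: (L₁.map List.formPerm ++ L₂.map List.formPerm) := by
        rw [hT, List.map_append, List.map_cons]
        exact List.perm_middle
      rw [List.map_append, List.Perm.prod_eq' hpm hcommP, List.prod_cons]
    -- nodup structure of flatten T
    have hfT3 : (L₁.flatten ++ (b ++ L₂.flatten)).Nodup := by
      have h9 : T.flatten = L₁.flatten ++ (b ++ L₂.flatten) := by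
        rw [hT, List.flatten_append, List.flatten_cons]
      rwa [h9] at hTnd
    have hbnotLL : ∀ y ∈ b, y ∉ (L₁ ++ L₂).flatten := by
      intro y hy hcon
      rw [List.flatten_append, List.mem_append] at hcon
      obtain ⟨hn1, hn2, hd12⟩ := List.nodup_append'.mp hfT3
      obtain ⟨hn3, hn4, hd34⟩ := List.nodup_append'.mp hn2
      rcases hcon with h9 | h9
      · exact hd12 h9 (List.mem_append_left _ hy)
      · exact hd34 hy h9
    have hsubLL : ∀ y, y ∈ (L₁ ++ L₂).flatten → y ∈ T.flatten := by
      intro y hy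
      rw [List.flatten_append, List.mem_append] at hy
      have h9 : T.flatten = L₁.flatten ++ (b ++ L₂.flatten) := by
        rw [hT, List.flatten_append, List.flatten_cons]
      rw [h9, List.mem_append, List.mem_append]
      tauto
    have hρ'fix : ∀ y, y ∉ (L₁ ++ L₂).flatten → ρ' y = y := by
      intro y hy
      exact prod_formPerm_fix _ (fun bb hbb hybb =>
        hy (List.mem_flatten.mpr ⟨bb, hbb, hybb⟩))
    have hρ'x : ρ' x = x := hρ'fix x (fun hcon => hxTf (hsubLL x hcon))
    have hρ'w : ρ' w = w := hρ'fix w (hbnotLL w hwb)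
    have hcomm : ρ' * Equiv.swap w x = Equiv.swap w x * ρ' :=
      swap_commute_fix w x ρ' hρ'w hρ'x
    have hσb' : σ = K.formPerm * (b'.formPerm * ρ') := by
      rw [hσKρ, hρsplit, ← mul_assoc]
      rw [show b'.formPerm = b.formPerm from List.formPerm_rotate b hbnd i]
      rw [mul_assoc]
    have hxb'_nd : (x :: b').Nodup := List.nodup_cons.mpr ⟨hxb', hb'nd⟩
    have hfb'swap : b'.formPerm * Equiv.swap w x = List.formPerm (x :: b') := by
      rw [Equiv.swap_comm w x, hwdef, ← formPerm_concat x hb'ne hxb'_nd]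
      have hrot : (x :: b').rotate 1 = b' ++ [x] := by
        rw [List.rotate_cons_succ, List.rotate_zero]
      rw [← hrot, List.formPerm_rotate_one _ hxb'_nd]
    have hdisj_b't : List.Disjoint b' t := by
      intro y hy1 hy2
      have hyK : y ∈ K := by rw [← hKx]; exact List.mem_cons_of_mem _ hy2
      exact hdisjKT hyK (hbfT y ((hb'perm.mem_iff).mp hy1))
    have hndxb't : (x :: (b' ++ t)).Nodup := by
      rw [List.nodup_cons, List.nodup_append']
      refine ⟨?_, hb'nd, htnd, hdisj_b't⟩
      rw [List.mem_append]
      rintro (h9 | h9)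
      · exact hxb' h9
      · exact hxt h9
    have hMASTER : K.formPerm * List.formPerm (x :: b') = List.formPerm (x :: (b' ++ t)) := by
      conv_lhs => rw [← hKx]
      exact (formPerm_cons_append t b' x hndxb't).symm
    have hγeq : Equiv.swap x z * σ * Equiv.swap w x
        = List.formPerm (z :: (b2 ++ t)) * ρ' := by
      calc Equiv.swap x z * σ * Equiv.swap w x
          = Equiv.swap x z * (K.formPerm * (b'.formPerm * ρ')) * Equiv.swap w x := by
            rw [hσb']
        _ = List.formPerm (z :: (b2 ++ t)) * ρ' := by
            simp only [mul_assoc]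
            rw [hcomm]
            rw [← mul_assoc b'.formPerm (Equiv.swap w x) ρ', hfb'swap]
            rw [← mul_assoc K.formPerm, hMASTER]
            rw [show (x :: (b' ++ t)) = x :: z :: (b2 ++ t) by rw [← hb'cons]; simp]
            rw [List.formPerm_cons_cons]
            simp only [← mul_assoc]
            rw [Equiv.swap_mul_self, one_mul]
    have hxzb2t : x ∉ (z :: (b2 ++ t)) := by
      rw [show (z :: (b2 ++ t)) = b' ++ t by rw [← hb'cons]; simp]
      rw [List.mem_append]
      rintro (h9 | h9)
      · exact hxb' h9
      · exact hxt h9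
    have hγx : (Equiv.swap x z * σ * Equiv.swap w x) x = x := by
      rw [hγeq, Equiv.Perm.mul_apply, hρ'x, List.formPerm_apply_of_notMem hxzb2t]
    have hmE : m ∈ E := by
      rw [← Multiset.mem_toList, ← hTlens]
      exact List.mem_map_of_mem hbT
    have hEm : (m:ℕ) + (E.erase m).sum = E.sum := Multiset.sum_erase hmE
    have hLLlen : (((L₁ ++ L₂).map List.length : List ℕ) : Multiset ℕ) = E.erase m := by
      have h9 : E = ((T.map List.length : List ℕ) : Multiset ℕ) := by
        rw [hTlens, Multiset.coe_toList]
      rw [h9, hT]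
      simp only [List.map_append, List.map_cons]
      rw [show ((List.map List.length L₁ ++ b.length :: List.map List.length L₂ :
          List ℕ) : Multiset ℕ)
          = ↑(List.map List.length L₁) + (m ::ₘ ↑(List.map List.length L₂)) from by
        rw [Multiset.cons_coe, ← Multiset.coe_add]]
      rw [Multiset.add_cons, Multiset.erase_cons_head, Multiset.coe_add]
    have hctfγ : cycleTypeFull (Equiv.swap x z * σ * Equiv.swap w x)
        = 1 ::ₘ ((k + m - 1) ::ₘ E.erase m) := by
      rw [hγeq]
      have hflat' : ((z :: (b2 ++ t)) :: (L₁ ++ L₂)).flatten.Nodup := by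
        rw [List.flatten_cons, List.nodup_append']
        refine ⟨?_, ?_, ?_⟩
        · rw [show (z :: (b2 ++ t)) = b' ++ t by rw [← hb'cons]; simp]
          exact hndxb't.of_cons
        · have h9 := hfT3
          obtain ⟨hn1, hn2, hd12⟩ := List.nodup_append'.mp h9
          obtain ⟨hn3, hn4, hd34⟩ := List.nodup_append'.mp hn2
          rw [List.flatten_append, List.nodup_append']
          exact ⟨hn1, hn4, fun y hy1 hy2 =>
            hd12 hy1 (List.mem_append_right _ hy2)⟩
        · intro y hy1 hy2
          rw [show (z :: (b2 ++ t)) = b' ++ t by rw [← hb'cons]; simp,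
            List.mem_append] at hy1
          rcases hy1 with h9 | h9
          · exact hbnotLL y ((hb'perm.mem_iff).mp h9) hy2
          · have hyK : y ∈ K := by rw [← hKx]; exact List.mem_cons_of_mem _ h9
            exact hdisjKT hyK (hsubLL y hy2)
      have hne' : ∀ bb ∈ (z :: (b2 ++ t)) :: (L₁ ++ L₂), bb ≠ [] := by
        intro bb hbb
        rcases List.mem_cons.mp hbb with rfl | hbb
        · simp
        · refine hne bb ?_
          rw [hblocks]
          refine List.mem_cons_of_mem _ ?_
          rw [hT]
          rw [List.mem_append] at hbb
          rcases hbb with h9 | h9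
          · exact List.mem_append_left _ h9
          · exact List.mem_append_right _ (List.mem_cons_of_mem _ h9)
      have hct := cycleTypeFull_prod_blocks ((z :: (b2 ++ t)) :: (L₁ ++ L₂)) hflat' hne'
      simp only [List.map_cons, List.prod_cons] at hct
      rw [← hρ'def] at hct
      rw [hct]
      have hb2len : b2.length = m - 1 := by
        have h9 := congrArg List.length hb'cons
        simp only [List.length_cons] at h9
        omega
      have hlz : (z :: (b2 ++ t)).length = k + m - 1 := by
        simp only [List.length_cons, List.length_append]
        omega
      rw [show ((((z :: (b2 ++ t)).length :: (L₁ ++ L₂).map List.length : List ℕ)) :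
          Multiset ℕ)
          = (z :: (b2 ++ t)).length ::ₘ (((L₁ ++ L₂).map List.length : List ℕ) :
            Multiset ℕ) from by rw [Multiset.cons_coe]]
      rw [hLLlen, hlz]
      have hsum9 : ((k + m - 1) :: (L₁ ++ L₂).map List.length).sum
          = (k + m - 1) + (E.erase m).sum := by
        rw [List.sum_cons]
        congr 1
        have h9 := congrArg Multiset.sum hLLlen
        rw [Multiset.sum_coe] at h9
        exact h9
      rw [hsum9, Fintype.card_fin]
      rw [show n + 1 - (k + m - 1 + (E.erase m).sum) = 1 by omega]
      rw [Multiset.replicate_one]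
      rw [show ((k + m - 1) ::ₘ E.erase m) + ({1} : Multiset ℕ)
          = 1 ::ₘ ((k + m - 1) ::ₘ E.erase m) from by rw [add_comm, Multiset.singleton_add]]
    rw [hhdef]
    exact fiber_eval c hc n σ x z w hzx hwx hγx _ hctfγ
  have hperblock : ∀ b ∈ T, ∑ z ∈ b.toFinset, h z
      = b.length * c n ((k + b.length - 1) ::ₘ E.erase b.length) := by
    intro b hb
    have hbnd : b.Nodup := (List.nodup_flatten.mp hTnd).1 b hb
    rw [Finset.sum_congr rfl (fun z hz => hperz b hb z (List.mem_toFinset.mp hz))]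
    rw [Finset.sum_const, List.toFinset_card_of_nodup hbnd, smul_eq_mul]
  have hBsum : ∑ z ∈ B, h z = (E.map fun m => m * c n ((k + m - 1) ::ₘ E.erase m)).sum := by
    set G : ℕ → ℕ := fun m => m * c n ((k + m - 1) ::ₘ E.erase m) with hGdef
    calc ∑ z ∈ B, h z = ∑ z ∈ T.flatten.toFinset, h z := by rw [hBflatten]
      _ = (T.map (fun b => ∑ z ∈ b.toFinset, h z)).sum := sum_flatten_toFinset h T hTnd
      _ = (T.map (fun b => G b.length)).sum := by
          refine congrArg List.sum (List.map_congr_left ?_)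
          intro b hb
          rw [hperblock b hb, hGdef]
      _ = ((T.map List.length).map G).sum := by rw [List.map_map]; rfl
      _ = (E.toList.map G).sum := by rw [hTlens]
      _ = (Multiset.map G ↑E.toList).sum := by rw [Multiset.map_coe, Multiset.sum_coe]
      _ = (E.map G).sum := by rw [Multiset.coe_toList]
  rw [hLHS, hsum_AB, hAsum, hBsum]
end

section
/- Define linear operators on formal symbols a^λ (λ a partition containing parts i and r): Ξ_i a^λ = a^{λ↓(i)}, Ω_{i,d} a^λ = a^{λ↑(i−1−d,d)}, Φ_{i,j} a^λ = a^{λ↓(i,j)}, and Θ_i = (α−1)(i−1)Ξ_i + Σ_{d=1}^{i−2} Ω_{i,d} + α Σ_j j(m_j(λ)−δ_{ij}) Φ_{i,j}. Then for all integers i, r, the identity Θ_r(Θ_i − α r Φ_{i,r}) = Θ_i(Θ_r − α i Φ_{i,r}) + α(i−r) Θ_{i+r−1} Φ_{i,r} holds on symbols a^λ with λ containing both a part i and a part r. -/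
open Finset

noncomputable section

variable {F : Type*} [Field F]

/-- The image of the basis symbol `a^λ` under
`Θ_i = (α−1)(i−1)Ξ_i + Σ_{d=1}^{i−2} Ω_{i,d} + α Σ_j j(m_j(λ)−δ_{ij}) Φ_{i,j}`, where
`Ξ_i a^λ = a^{λ↓(i)}`, `Ω_{i,d} a^λ = a^{λ↑(i−1−d,d)}` and `Φ_{i,j} a^λ = a^{λ↓(i,j)}`.
Basis symbols are the `Finsupp.single lam 1` in the space `Multiset ℕ →₀ F`. -/
def vTheta (α : F) (i : ℕ) (lam : Multiset ℕ) : Multiset ℕ →₀ F :=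
  ((α - 1) * ((i - 1 : ℕ) : F)) • Finsupp.single ((i - 1) ::ₘ lam.erase i) (1 : F)
    + ∑ d ∈ Finset.Icc 1 (i - 2), Finsupp.single ((i - 1 - d) ::ₘ d ::ₘ lam.erase i) (1 : F)
    + α • ∑ j ∈ lam.toFinset,
        ((j : F) * ((lam.count j - if i = j then 1 else 0 : ℕ) : F)) •
          Finsupp.single ((i + j - 1) ::ₘ (lam.erase i).erase j) (1 : F)

/-- The linear operator `Θ_i` on the formal vector space spanned by the symbols `a^λ`. -/
def ThetaOp (α : F) (i : ℕ) : (Multiset ℕ →₀ F) →ₗ[F] (Multiset ℕ →₀ F) :=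
  Finsupp.lsum ℕ fun lam => LinearMap.toSpanSingleton F _ (vTheta α i lam)

/-- The linear operator `Φ_{i,r} : a^λ ↦ a^{λ↓(i,r)}`. -/
def PhiOp (i r : ℕ) : (Multiset ℕ →₀ F) →ₗ[F] (Multiset ℕ →₀ F) :=
  Finsupp.lsum ℕ fun lam =>
    LinearMap.toSpanSingleton F _ (Finsupp.single ((i + r - 1) ::ₘ (lam.erase i).erase r) (1 : F))

def consOp (a : ℕ) : (Multiset ℕ →₀ F) →ₗ[F] (Multiset ℕ →₀ F) :=
  Finsupp.lmapDomain F F (fun μ => a ::ₘ μ)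

def eraseOp (n : ℕ) : (Multiset ℕ →₀ F) →ₗ[F] (Multiset ℕ →₀ F) :=
  Finsupp.lmapDomain F F (fun μ => μ.erase n)

lemma consOp_single (a : ℕ) (μ : Multiset ℕ) (c : F) :
    consOp a (Finsupp.single μ c) = Finsupp.single (a ::ₘ μ) c := by
  simp [consOp, Finsupp.lmapDomain_apply, Finsupp.mapDomain_single]

lemma eraseOp_single (n : ℕ) (μ : Multiset ℕ) (c : F) :
    eraseOp n (Finsupp.single μ c) = Finsupp.single (μ.erase n) c := by
  simp [eraseOp, Finsupp.lmapDomain_apply, Finsupp.mapDomain_single]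

lemma eraseOp_consOp (n : ℕ) :
    (eraseOp n : Module.End F (Multiset ℕ →₀ F)) * consOp n = 1 := by
  apply Finsupp.lhom_ext
  intro a b
  simp [Module.End.mul_apply, consOp_single, eraseOp_single, Multiset.erase_cons_head,
    Module.End.one_apply]

lemma cons_mul_comm (a b : ℕ) :
    (consOp a : Module.End F (Multiset ℕ →₀ F)) * consOp b = consOp b * consOp a := by
  apply Finsupp.lhom_ext
  intro μ c
  simp [Module.End.mul_apply, consOp_single, Multiset.cons_swap]

def cval (n : ℕ) (μ : Multiset ℕ) : Multiset ℕ →₀ F :=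
  ∑ j ∈ μ.toFinset, ((j * μ.count j : ℕ) : F) •
    Finsupp.single ((n + j - 1) ::ₘ μ.erase j) (1 : F)

lemma cval_cons (n u : ℕ) (ν : Multiset ℕ) :
    cval (F := F) n (u ::ₘ ν)
      = consOp u (cval n ν) + (u : F) • Finsupp.single ((n + u - 1) ::ₘ ν) (1 : F) := by
  classical
  rw [cval, cval, map_sum]
  have hsplit : ∀ j ∈ (u ::ₘ ν).toFinset,
      ((j * (u ::ₘ ν).count j : ℕ) : F) • Finsupp.single ((n + j - 1) ::ₘ (u ::ₘ ν).erase j) (1:F)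
      = ((j * ν.count j : ℕ) : F) • Finsupp.single ((n + j - 1) ::ₘ (u ::ₘ ν).erase j) (1:F)
        + (if j = u then (u : F) • Finsupp.single ((n + u - 1) ::ₘ ν) (1:F) else 0) := by
    intro j hj
    rcases eq_or_ne j u with rfl | hne
    · rw [if_pos rfl, Multiset.count_cons_self, Multiset.erase_cons_head]
      push_cast
      rw [mul_add, mul_one, add_smul]
    · rw [if_neg hne, Multiset.count_cons_of_ne hne, add_zero]
  rw [Finset.sum_congr rfl hsplit, Finset.sum_add_distrib, Finset.sum_ite_eq']
  have humem : u ∈ (u ::ₘ ν).toFinset := Multiset.mem_toFinset.2 (Multiset.mem_cons_self u ν)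
  rw [if_pos humem]
  congr 1
  have hsub : ν.toFinset ⊆ (u ::ₘ ν).toFinset := by
    intro x hx
    exact Multiset.mem_toFinset.2 (Multiset.mem_cons_of_mem (Multiset.mem_toFinset.1 hx))
  have hzero : ∀ x ∈ (u ::ₘ ν).toFinset, x ∉ ν.toFinset →
      ((x * ν.count x : ℕ) : F) • Finsupp.single ((n + x - 1) ::ₘ (u ::ₘ ν).erase x) (1:F) = 0 := by
    intro x _ hx
    have : ν.count x = 0 := Multiset.count_eq_zero.2 (fun h => hx (Multiset.mem_toFinset.2 h))
    simp [this]
  rw [← Finset.sum_subset hsub hzero]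
  refine Finset.sum_congr rfl fun j hj => ?_
  rw [map_smul, consOp_single]
  rcases eq_or_ne j u with rfl | hne
  · have hu : j ∈ ν := Multiset.mem_toFinset.1 hj
    have hM : (n + j - 1) ::ₘ (j ::ₘ ν).erase j = j ::ₘ (n + j - 1) ::ₘ ν.erase j := by
      rw [Multiset.erase_cons_head, Multiset.cons_swap, Multiset.cons_erase hu]
    rw [hM]
  · have hM : (n + j - 1) ::ₘ (u ::ₘ ν).erase j = u ::ₘ (n + j - 1) ::ₘ ν.erase j := by
      rw [Multiset.erase_cons_tail _ (Ne.symm hne), Multiset.cons_swap]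
    rw [hM]

def Cop (α : F) (n : ℕ) : (Multiset ℕ →₀ F) →ₗ[F] (Multiset ℕ →₀ F) :=
  Finsupp.lsum ℕ fun μ => LinearMap.toSpanSingleton F _ (α • cval n μ)

lemma Cop_single (α : F) (n : ℕ) (μ : Multiset ℕ) (c : F) :
    Cop α n (Finsupp.single μ c) = c • α • cval n μ := by
  simp [Cop, Finsupp.lsum_single, LinearMap.toSpanSingleton_apply]

lemma Cop_cons (α : F) (n u : ℕ) :
    (Cop α n : Module.End F (Multiset ℕ →₀ F)) * consOp u
      = (consOp u : Module.End F (Multiset ℕ →₀ F)) * Cop α n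
        + (α * (u : F)) • consOp (n + u - 1) := by
  apply Finsupp.lhom_ext
  intro ν b
  simp only [Module.End.mul_apply, LinearMap.add_apply, LinearMap.smul_apply,
    consOp_single, Cop_single, cval_cons, map_add, map_smul, smul_add]
  rw [← Finsupp.smul_single_one ((n + u - 1) ::ₘ ν) b]
  module

def Mop (α : F) (n : ℕ) : Module.End F (Multiset ℕ →₀ F) :=
  ((α - 1) * ((n - 1 : ℕ) : F)) • consOp (n - 1)
    + ∑ d ∈ Finset.Icc 1 (n - 2), (consOp (n - 1 - d) : Module.End F (Multiset ℕ →₀ F)) * consOp d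

def Gop (α : F) (n : ℕ) : Module.End F (Multiset ℕ →₀ F) :=
  Mop α n + Cop α n

lemma cons_Mop_comm (α : F) (a n : ℕ) :
    (consOp a : Module.End F (Multiset ℕ →₀ F)) * Mop α n = Mop α n * consOp a := by
  rw [Mop, mul_add, add_mul, mul_smul_comm, smul_mul_assoc, cons_mul_comm,
    Finset.mul_sum, Finset.sum_mul]
  congr 1
  refine Finset.sum_congr rfl fun d _ => ?_
  rw [← mul_assoc, cons_mul_comm, mul_assoc, cons_mul_comm, ← mul_assoc]

lemma Mop_Mop (α : F) (r i : ℕ) :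
    (Mop α r : Module.End F (Multiset ℕ →₀ F)) * Mop α i = Mop α i * Mop α r := by
  set M := Mop α i with hM
  rw [Mop, add_mul, mul_add, smul_mul_assoc, mul_smul_comm, hM, cons_Mop_comm,
    Finset.sum_mul, Finset.mul_sum]
  congr 1
  refine Finset.sum_congr rfl fun e _ => ?_
  rw [mul_assoc, cons_Mop_comm, ← mul_assoc, cons_Mop_comm, mul_assoc]

/-- residual of moving `C_r` past `M_i`. -/

def Rres (α : F) (r i : ℕ) : Module.End F (Multiset ℕ →₀ F) :=
  (((α - 1) * ((i - 1 : ℕ) : F)) * (α * ((i - 1 : ℕ) : F))) • consOp (r + (i - 1) - 1)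
    + ∑ d ∈ Finset.Icc 1 (i - 2),
        ((α * (d : F)) • ((consOp (i - 1 - d) : Module.End F (Multiset ℕ →₀ F)) * consOp (r + d - 1))
          + (α * ((i - 1 - d : ℕ) : F)) • ((consOp (r + (i - 1 - d) - 1) : Module.End F (Multiset ℕ →₀ F)) * consOp d))

lemma Cop_Mop (α : F) (r i : ℕ) :
    (Cop α r : Module.End F (Multiset ℕ →₀ F)) * Mop α i
      = (Mop α i : Module.End F (Multiset ℕ →₀ F)) * Cop α r + Rres α r i := by
  have hsum : ∀ d ∈ Finset.Icc 1 (i - 2),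
      (Cop α r : Module.End F (Multiset ℕ →₀ F)) * ((consOp (i-1-d) : Module.End F (Multiset ℕ →₀ F)) * consOp d)
        = ((consOp (i-1-d) : Module.End F (Multiset ℕ →₀ F)) * consOp d) * Cop α r
          + ((α * (d : F)) • ((consOp (i - 1 - d) : Module.End F (Multiset ℕ →₀ F)) * consOp (r + d - 1))
            + (α * ((i - 1 - d : ℕ) : F)) • ((consOp (r + (i - 1 - d) - 1) : Module.End F (Multiset ℕ →₀ F)) * consOp d)) := by
    intro d _
    rw [← mul_assoc, Cop_cons, add_mul, smul_mul_assoc, mul_assoc, Cop_cons, mul_add,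
      mul_smul_comm, ← mul_assoc, cons_mul_comm]
    abel
  rw [Mop, Rres, mul_add, add_mul, mul_smul_comm, smul_mul_assoc, Cop_cons,
    Finset.mul_sum, Finset.sum_mul, Finset.sum_congr rfl hsum, Finset.sum_add_distrib]
  rw [smul_add, smul_smul]
  abel

lemma Theta_single (α : F) (n : ℕ) (μ : Multiset ℕ) (c : F) :
    ThetaOp α n (Finsupp.single μ c) = c • vTheta α n μ := by
  simp [ThetaOp, Finsupp.lsum_single, LinearMap.toSpanSingleton_apply]

lemma vTheta_eq (α : F) (n : ℕ) (μ : Multiset ℕ) :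
    vTheta α n μ = Gop α n (Finsupp.single (μ.erase n) (1 : F)) := by
  rw [vTheta, Gop, Mop]
  simp only [LinearMap.add_apply, LinearMap.smul_apply, LinearMap.coe_sum, Finset.sum_apply,
    Module.End.mul_apply, Cop_single, consOp_single, one_smul]
  congr 1
  rw [cval]
  have hsub : (μ.erase n).toFinset ⊆ μ.toFinset :=
    Multiset.toFinset_subset.2 (Multiset.erase_subset _ _)
  have hzero : ∀ x ∈ μ.toFinset, x ∉ (μ.erase n).toFinset →
      ((x : F) * ((μ.count x - if n = x then 1 else 0 : ℕ) : F)) •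
        Finsupp.single ((n + x - 1) ::ₘ (μ.erase n).erase x) (1:F) = 0 := by
    intro x hx hx'
    have hc0 : (μ.erase n).count x = 0 :=
      Multiset.count_eq_zero.2 (fun h => hx' (Multiset.mem_toFinset.2 h))
    rcases eq_or_ne x n with rfl | hne
    · rw [if_pos rfl]
      rw [Multiset.count_erase_self] at hc0
      rw [hc0]
      simp
    · exfalso
      rw [Multiset.count_erase_of_ne hne] at hc0
      exact hne (by simpa [Multiset.count_eq_zero.1 hc0] using Multiset.mem_toFinset.1 hx)
  rw [← Finset.sum_subset hsub hzero]
  congr 1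
  refine Finset.sum_congr rfl fun j hj => ?_
  congr 1
  rcases eq_or_ne j n with rfl | hne
  · rw [if_pos rfl, Multiset.count_erase_self, Nat.cast_mul]
  · rw [if_neg (Ne.symm hne), Multiset.count_erase_of_ne hne, Nat.sub_zero,
      Nat.cast_mul]

lemma Theta_eq (α : F) (n : ℕ) :
    ThetaOp α n = (Gop α n : Module.End F (Multiset ℕ →₀ F)) * eraseOp n := by
  apply Finsupp.lhom_ext
  intro μ b
  rw [Theta_single, vTheta_eq, Module.End.mul_apply, eraseOp_single,
    ← Finsupp.smul_single_one (μ.erase n) b, map_smul]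

lemma Gop_consOp (α : F) (n u : ℕ) :
    (Gop α n : Module.End F (Multiset ℕ →₀ F)) * consOp u
      = (consOp u : Module.End F (Multiset ℕ →₀ F)) * Gop α n
        + (α * (u : F)) • consOp (n + u - 1) := by
  rw [Gop, add_mul, mul_add, Cop_cons, ← cons_Mop_comm]
  abel

lemma Gop_cons (α : F) (n u : ℕ) (ν : Multiset ℕ) :
    Gop α n (Finsupp.single (u ::ₘ ν) (1 : F))
      = consOp u (Gop α n (Finsupp.single ν (1 : F)))
        + (α * (u : F)) • Finsupp.single ((n + u - 1) ::ₘ ν) (1 : F) := by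
  have h := congrArg (fun f => f (Finsupp.single ν (1:F))) (Gop_consOp α n u)
  simp only [Module.End.mul_apply, LinearMap.add_apply, LinearMap.smul_apply,
    consOp_single] at h
  exact h

lemma Cop_comm (α : F) {i r : ℕ} (hi : 1 ≤ i) (hr : 1 ≤ r) :
    (Cop α r : Module.End F (Multiset ℕ →₀ F)) * Cop α i
      = (Cop α i : Module.End F (Multiset ℕ →₀ F)) * Cop α r
        + (α * ((i : F) - (r : F))) • Cop α (i + r - 1) := by
  classical
  apply Finsupp.lhom_ext
  intro ν b
  have expand : ∀ a c : ℕ, 1 ≤ a → Cop α c (cval a ν)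
      = α • (∑ j ∈ ν.toFinset, ((j * ν.count j : ℕ):F) • consOp (a+j-1) (cval c (ν.erase j)))
        + α • (∑ j ∈ ν.toFinset, (((j * ν.count j : ℕ):F) * ((a+j-1 : ℕ):F)) •
            Finsupp.single ((a+c+j-2) ::ₘ ν.erase j) (1:F)) := by
    intro a c ha
    calc Cop α c (cval a ν)
        = ∑ j ∈ ν.toFinset,
            (α • (((j * ν.count j : ℕ):F) • consOp (a+j-1) (cval c (ν.erase j)))
              + α • ((((j * ν.count j : ℕ):F) * ((a+j-1 : ℕ):F)) •
                  Finsupp.single ((a+c+j-2) ::ₘ ν.erase j) (1:F))) := by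
          conv_lhs => rw [cval]
          rw [map_sum]
          refine Finset.sum_congr rfl fun j hj => ?_
          rw [map_smul, Cop_single, one_smul, cval_cons]
          have he : c + (a+j-1) - 1 = a+c+j-2 := by omega
          rw [he, smul_add]
          module
      _ = _ := by
          rw [Finset.sum_add_distrib, ← Finset.smul_sum, ← Finset.smul_sum]
  have form : ∀ a c : ℕ,
      (∑ j ∈ ν.toFinset, ((j * ν.count j : ℕ):F) • consOp (a+j-1) (cval c (ν.erase j)))
        = ∑ j ∈ ν.toFinset, ∑ k ∈ ν.toFinset,
            ((j * ν.count j * (k * (ν.count k - if k = j then 1 else 0)) : ℕ):F) •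
              Finsupp.single ((a+j-1) ::ₘ (c+k-1) ::ₘ (ν.erase j).erase k) (1:F) := by
    intro a c
    refine Finset.sum_congr rfl fun j hj => ?_
    rw [cval, map_sum, Finset.smul_sum]
    have hsub : (ν.erase j).toFinset ⊆ ν.toFinset :=
      Multiset.toFinset_subset.2 (Multiset.erase_subset _ _)
    have hpt : ∀ k ∈ (ν.erase j).toFinset,
        ((j * ν.count j : ℕ):F) • consOp (a+j-1)
            (((k * (ν.erase j).count k : ℕ):F) • Finsupp.single ((c+k-1) ::ₘ (ν.erase j).erase k) (1:F))
          = ((j * ν.count j * (k * (ν.count k - if k = j then 1 else 0)) : ℕ):F) •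
              Finsupp.single ((a+j-1) ::ₘ (c+k-1) ::ₘ (ν.erase j).erase k) (1:F) := by
      intro k hk
      rw [map_smul, consOp_single, smul_smul]
      have hc : (ν.erase j).count k = ν.count k - if k = j then 1 else 0 := by
        rcases eq_or_ne k j with rfl | hne
        · rw [if_pos rfl, Multiset.count_erase_self]
        · rw [if_neg hne, Multiset.count_erase_of_ne hne, Nat.sub_zero]
      rw [hc, ← Nat.cast_mul, ← mul_assoc]
    rw [Finset.sum_congr rfl hpt]
    refine Finset.sum_subset hsub fun k hk hk' => ?_
    have hc0 : (ν.erase j).count k = 0 :=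
      Multiset.count_eq_zero.2 (fun h => hk' (Multiset.mem_toFinset.2 h))
    have hz : k * (ν.count k - if k = j then 1 else 0) = 0 := by
      rcases eq_or_ne k j with rfl | hne
      · rw [if_pos rfl]
        rw [Multiset.count_erase_self] at hc0
        rw [hc0]
        ring
      · exfalso
        rw [Multiset.count_erase_of_ne hne] at hc0
        exact hne (by simpa [Multiset.count_eq_zero.1 hc0] using Multiset.mem_toFinset.1 hk)
    rw [mul_assoc, hz]
    simp
  have dsym : (∑ j ∈ ν.toFinset, ((j * ν.count j : ℕ):F) • consOp (i+j-1) (cval (F := F) r (ν.erase j)))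
      = ∑ j ∈ ν.toFinset, ((j * ν.count j : ℕ):F) • consOp (r+j-1) (cval (F := F) i (ν.erase j)) := by
    rw [form i r, form r i, Finset.sum_comm]
    refine Finset.sum_congr rfl fun k hk => Finset.sum_congr rfl fun j hj => ?_
    have hm : (r+k-1) ::ₘ (i+j-1) ::ₘ (ν.erase k).erase j
        = (i+j-1) ::ₘ (r+k-1) ::ₘ (ν.erase j).erase k := by
      rw [Multiset.cons_swap, Multiset.erase_comm]
    rw [hm]
    congr 2
    rcases eq_or_ne k j with rfl | hne
    · ring
    · rw [if_neg hne, if_neg (Ne.symm hne), Nat.sub_zero, Nat.sub_zero]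
      ring
  have key : Cop α r (cval i ν)
      = Cop α i (cval r ν) + ((i:F) - (r:F)) • (α • cval (i+r-1) ν) := by
    rw [expand i r hi, expand r i hr, dsym, add_assoc]
    congr 1
    have hcv : cval (F := F) (i+r-1) ν
        = ∑ j ∈ ν.toFinset, ((j * ν.count j : ℕ):F) •
            Finsupp.single ((i+r+j-2) ::ₘ ν.erase j) (1:F) := by
      rw [cval]
      refine Finset.sum_congr rfl fun j hj => ?_
      have : i+r-1+j-1 = i+r+j-2 := by omega
      rw [this]
    rw [hcv]
    have hidx : ∀ j ∈ ν.toFinset,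
        (((j * ν.count j : ℕ):F) * ((r+j-1 : ℕ):F)) •
            Finsupp.single ((r+i+j-2) ::ₘ ν.erase j) (1:F)
          = (((j * ν.count j : ℕ):F) * ((r+j-1 : ℕ):F)) •
            Finsupp.single ((i+r+j-2) ::ₘ ν.erase j) (1:F) := by
      intro j hj
      have : r+i+j-2 = i+r+j-2 := by omega
      rw [this]
    rw [Finset.sum_congr rfl hidx, Finset.smul_sum, Finset.smul_sum, Finset.smul_sum,
      Finset.smul_sum, ← Finset.sum_add_distrib]
    refine Finset.sum_congr rfl fun j hj => ?_
    have h1 : ((i + j - 1 : ℕ) : F) = (i : F) + (j : F) - 1 := by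
      rw [Nat.cast_sub (by omega : 1 ≤ i + j)]
      push_cast
      ring
    have h2 : ((r + j - 1 : ℕ) : F) = (r : F) + (j : F) - 1 := by
      rw [Nat.cast_sub (by omega : 1 ≤ r + j)]
      push_cast
      ring
    rw [h1, h2]
    match_scalars
    ring
  simp only [Module.End.mul_apply, LinearMap.add_apply, LinearMap.smul_apply, Cop_single,
    map_smul, key]
  module

lemma sum_extend (g : ℕ → Module.End F (Multiset ℕ →₀ F)) (c : ℕ → F) (m M : ℕ) (h : m ≤ M) :
    (∑ d ∈ Finset.Icc 1 m, c d • g d)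
      = ∑ f ∈ Finset.Icc 1 M, (if f ≤ m then c f else 0) • g f := by
  rw [← Finset.sum_subset (Finset.Icc_subset_Icc_right h) (fun x hx hx' => ?_)]
  · refine Finset.sum_congr rfl fun d hd => ?_
    rw [if_pos (Finset.mem_Icc.1 hd).2]
  · have hxm : ¬ x ≤ m := by
      intro hc
      exact hx' (Finset.mem_Icc.2 ⟨(Finset.mem_Icc.1 hx).1, hc⟩)
    rw [if_neg hxm, zero_smul]

lemma sum_shift_extend (g : ℕ → Module.End F (Multiset ℕ →₀ F)) (c : ℕ → F) (m r M : ℕ)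
    (hr : 1 ≤ r) (hM : Finset.Icc r (m + r - 1) ⊆ Finset.Icc 1 M) :
    (∑ d ∈ Finset.Icc 1 m, c (r + d - 1) • g (r + d - 1))
      = ∑ f ∈ Finset.Icc 1 M, (if r ≤ f ∧ f ≤ m + r - 1 then c f else 0) • g f := by
  have h1 : (∑ d ∈ Finset.Icc 1 m, c (r + d - 1) • g (r + d - 1))
      = ∑ f ∈ Finset.Icc r (m + r - 1), c f • g f := by
    refine Finset.sum_nbij' (fun d => r + d - 1) (fun f => f + 1 - r) ?_ ?_ ?_ ?_ ?_
    · intro a ha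
      simp only [Finset.mem_Icc] at *
      omega
    · intro a ha
      simp only [Finset.mem_Icc] at *
      omega
    · intro a ha
      simp only [Finset.mem_Icc] at ha
      omega
    · intro a ha
      simp only [Finset.mem_Icc] at ha
      omega
    · intro a ha
      rfl
  rw [h1, ← Finset.sum_subset hM (fun x hx hx' => ?_)]
  · refine Finset.sum_congr rfl fun d hd => ?_
    simp only [Finset.mem_Icc] at hd
    rw [if_pos ⟨hd.1, hd.2⟩]
  · have : ¬ (r ≤ x ∧ x ≤ m + r - 1) := by
      intro hc
      exact hx' (Finset.mem_Icc.2 ⟨hc.1, hc.2⟩)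
    rw [if_neg this, zero_smul]

lemma cast_succ_eq {f n : ℕ} (h : f + 1 = n) : (f : F) + 1 = (n : F) := by
  rw [← h]; push_cast; ring

set_option maxHeartbeats 2000000 in

set_option maxHeartbeats 2000000 in
lemma Rcomb (α : F) {i r : ℕ} (hi : 1 ≤ i) (hr : 1 ≤ r) :
    Rres α r i - Rres α i r = (α * ((i : F) - (r : F))) • Mop (F := F) α (i + r - 1) := by
  have hfam : ∀ a c : ℕ, 1 ≤ a → 1 ≤ c →
      (∑ d ∈ Finset.Icc 1 (a - 2),
        ((α * (d : F)) • ((consOp (a - 1 - d) : Module.End F (Multiset ℕ →₀ F)) * consOp (c + d - 1))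
          + (α * ((a - 1 - d : ℕ) : F)) • ((consOp (c + (a - 1 - d) - 1) : Module.End F (Multiset ℕ →₀ F)) * consOp d)))
      = (∑ f ∈ Finset.Icc 1 (a + c - 3),
          (if c ≤ f ∧ f ≤ (a-2) + c - 1 then α * ((f : F) + 1 - (c : F)) else 0) •
            ((consOp (a + c - 2 - f) : Module.End F (Multiset ℕ →₀ F)) * consOp f))
        + ∑ f ∈ Finset.Icc 1 (a + c - 3),
          (if f ≤ a - 2 then α * ((a : F) - 1 - (f : F)) else 0) •
            ((consOp (a + c - 2 - f) : Module.End F (Multiset ℕ →₀ F)) * consOp f) := by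
    intro a c ha hc
    rw [Finset.sum_add_distrib]
    congr 1
    · have step : ∀ d ∈ Finset.Icc 1 (a - 2),
          (α * (d : F)) • ((consOp (a - 1 - d) : Module.End F (Multiset ℕ →₀ F)) * consOp (c + d - 1))
          = (fun f : ℕ => (α * ((f : F) + 1 - (c : F)))) (c + d - 1) •
              (fun f => (consOp (a + c - 2 - f) : Module.End F (Multiset ℕ →₀ F)) * consOp f) (c + d - 1) := by
        intro d hd
        simp only [Finset.mem_Icc] at hd
        have h1 : a + c - 2 - (c + d - 1) = a - 1 - d := by omega
        have h2 : ((c + d - 1 : ℕ) : F) = (c : F) + (d : F) - 1 := by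
          rw [Nat.cast_sub (by omega : 1 ≤ c + d)]
          push_cast
          ring
        simp only [h1, h2]
        congr 1
        ring
      exact (Finset.sum_congr rfl step).trans
        (sum_shift_extend (fun f => (consOp (a + c - 2 - f) : Module.End F (Multiset ℕ →₀ F)) * consOp f)
          (fun f => α * ((f : F) + 1 - (c : F))) (a - 2) c (a + c - 3) hc
          (by intro x hx; simp only [Finset.mem_Icc] at *; omega))
    · have step : ∀ d ∈ Finset.Icc 1 (a - 2),
          (α * ((a - 1 - d : ℕ) : F)) • ((consOp (c + (a - 1 - d) - 1) : Module.End F (Multiset ℕ →₀ F)) * consOp d)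
          = (fun f : ℕ => (α * ((a : F) - 1 - (f : F)))) d •
              (fun f => (consOp (a + c - 2 - f) : Module.End F (Multiset ℕ →₀ F)) * consOp f) d := by
        intro d hd
        simp only [Finset.mem_Icc] at hd
        have h1 : c + (a - 1 - d) - 1 = a + c - 2 - d := by omega
        have h2 : ((a - 1 - d : ℕ) : F) = (a : F) - 1 - (d : F) := by
          rw [Nat.cast_sub (by omega : d ≤ a - 1), Nat.cast_sub (by omega : 1 ≤ a)]
          push_cast
          ring
        simp only [h1, h2]
      exact (Finset.sum_congr rfl step).trans
        (sum_extend (fun f => (consOp (a + c - 2 - f) : Module.End F (Multiset ℕ →₀ F)) * consOp f)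
          (fun f => α * ((a : F) - 1 - (f : F))) (a - 2) (a + c - 3) (by omega))
  rw [Rres, Rres, Mop, hfam i r hi hr, hfam r i hr hi]
  simp only [show r + i - 3 = i + r - 3 from by omega,
    show ∀ f : ℕ, r + i - 2 - f = i + r - 2 - f from fun f => by omega,
    show i + r - 1 - 2 = i + r - 3 from by omega,
    show ∀ f : ℕ, i + r - 1 - 1 - f = i + r - 2 - f from fun f => by omega,
    show i + r - 1 - 1 = i + r - 2 from by omega,
    show r + (i - 1) - 1 = i + r - 2 from by omega,
    show i + (r - 1) - 1 = i + r - 2 from by omega]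
  rw [smul_add, Finset.smul_sum]
  have hA : (((α - 1) * ((i - 1 : ℕ) : F)) * (α * ((i - 1 : ℕ) : F))) • (consOp (i + r - 2) : Module.End F (Multiset ℕ →₀ F))
      = (α * ((i : F) - (r : F))) • (((α - 1) * ((i + r - 2 : ℕ) : F)) • (consOp (i + r - 2) : Module.End F (Multiset ℕ →₀ F)))
        + (((α - 1) * ((r - 1 : ℕ) : F)) * (α * ((r - 1 : ℕ) : F))) • (consOp (i + r - 2) : Module.End F (Multiset ℕ →₀ F)) := by
    match_scalars
    rw [Nat.cast_sub hi, Nat.cast_sub hr, Nat.cast_sub (by omega : 2 ≤ i + r)]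
    push_cast
    ring
  have hS : ((∑ f ∈ Finset.Icc 1 (i + r - 3),
        (if r ≤ f ∧ f ≤ (i-2) + r - 1 then α * ((f : F) + 1 - (r : F)) else 0) •
          ((consOp (i + r - 2 - f) : Module.End F (Multiset ℕ →₀ F)) * consOp f))
      + ∑ f ∈ Finset.Icc 1 (i + r - 3),
        (if f ≤ i - 2 then α * ((i : F) - 1 - (f : F)) else 0) •
          ((consOp (i + r - 2 - f) : Module.End F (Multiset ℕ →₀ F)) * consOp f))
      = (∑ f ∈ Finset.Icc 1 (i + r - 3),
          (α * ((i : F) - (r : F))) • ((consOp (i + r - 2 - f) : Module.End F (Multiset ℕ →₀ F)) * consOp f))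
        + ((∑ f ∈ Finset.Icc 1 (i + r - 3),
        (if i ≤ f ∧ f ≤ (r-2) + i - 1 then α * ((f : F) + 1 - (i : F)) else 0) •
          ((consOp (i + r - 2 - f) : Module.End F (Multiset ℕ →₀ F)) * consOp f))
      + ∑ f ∈ Finset.Icc 1 (i + r - 3),
        (if f ≤ r - 2 then α * ((r : F) - 1 - (f : F)) else 0) •
          ((consOp (i + r - 2 - f) : Module.End F (Multiset ℕ →₀ F)) * consOp f)) := by
    rw [← Finset.sum_add_distrib, ← Finset.sum_add_distrib, ← Finset.sum_add_distrib]
    refine Finset.sum_congr rfl fun f hf => ?_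
    simp only [Finset.mem_Icc] at hf
    match_scalars
    split_ifs with h1 h2 h3 h4 <;>
    first
      | omega
      | ring1
      | linear_combination α * cast_succ_eq (F := F) (show f + 1 = i by omega)
      | linear_combination (-α) * cast_succ_eq (F := F) (show f + 1 = i by omega)
      | linear_combination α * cast_succ_eq (F := F) (show f + 1 = r by omega)
      | linear_combination (-α) * cast_succ_eq (F := F) (show f + 1 = r by omega)
      | linear_combination α * congrArg (fun n : ℕ => (n : F)) (show i = r by omega)
      | linear_combination (-α) * congrArg (fun n : ℕ => (n : F)) (show i = r by omega)
  rw [hA, hS]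
  abel

lemma Gcomm (α : F) {i r : ℕ} (hi : 1 ≤ i) (hr : 1 ≤ r) :
    (Gop α r : Module.End F (Multiset ℕ →₀ F)) * Gop α i
      = (Gop α i : Module.End F (Multiset ℕ →₀ F)) * Gop α r
        + (α * ((i : F) - (r : F))) • Gop α (i + r - 1) := by
  rw [Gop, Gop, Gop, smul_add]
  simp only [add_mul, mul_add]
  rw [Cop_Mop α r i, Cop_Mop α i r, Cop_comm α hi hr, Mop_Mop α r i, ← Rcomb α hi hr]
  abel

lemma Phi_single (i r : ℕ) (μ : Multiset ℕ) (c : F) :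
    PhiOp i r (Finsupp.single μ c)
      = c • Finsupp.single ((i + r - 1) ::ₘ (μ.erase i).erase r) (1 : F) := by
  simp [PhiOp, Finsupp.lsum_single, LinearMap.toSpanSingleton_apply]

/-- Proposition 5.1 of the paper: on symbols `a^λ` with `λ` a partition containing a part `i`
and a part `r`,
`Θ_r(Θ_i − α r Φ_{i,r}) = Θ_i(Θ_r − α i Φ_{i,r}) + α(i−r) Θ_{i+r−1} Φ_{i,r}`. -/
theorem stmt17 (α : F) (i r : ℕ) (lam : Multiset ℕ)
    (hpos : ∀ x ∈ lam, 0 < x) (hil : i ∈ lam) (hrl : r ∈ lam) :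
    ThetaOp α r ((ThetaOp α i - (α * (r : F)) • PhiOp i r : (Multiset ℕ →₀ F) →ₗ[F] (Multiset ℕ →₀ F)) (Finsupp.single lam (1 : F)))
      = ThetaOp α i ((ThetaOp α r - (α * (i : F)) • PhiOp i r : (Multiset ℕ →₀ F) →ₗ[F] (Multiset ℕ →₀ F)) (Finsupp.single lam (1 : F)))
        + (α * ((i : F) - (r : F))) •
            ThetaOp α (i + r - 1) (PhiOp i r (Finsupp.single lam (1 : F))) := by
  rcases eq_or_ne i r with rfl | hir
  · rw [sub_self, mul_zero, zero_smul, add_zero]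
  · have hi : 1 ≤ i := hpos i hil
    have hr : 1 ≤ r := hpos r hrl
    have hri : r ∈ lam.erase i := (Multiset.mem_erase_of_ne (Ne.symm hir)).2 hrl
    have hir' : i ∈ lam.erase r := (Multiset.mem_erase_of_ne hir).2 hil
    set κ := (lam.erase i).erase r with hκ
    have hc1 : lam.erase i = r ::ₘ κ := (Multiset.cons_erase hri).symm
    have hc2 : lam.erase r = i ::ₘ κ := by
      rw [hκ, Multiset.erase_comm]
      exact (Multiset.cons_erase hir').symm
    have hphi : PhiOp i r (Finsupp.single lam (1:F))
        = Finsupp.single ((i + r - 1) ::ₘ κ) (1 : F) := by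
      rw [Phi_single, one_smul, hκ]
    have hlhs : ThetaOp α r ((ThetaOp α i - (α * (r : F)) • PhiOp i r :
          (Multiset ℕ →₀ F) →ₗ[F] (Multiset ℕ →₀ F)) (Finsupp.single lam (1 : F)))
        = Gop α r (Gop α i (Finsupp.single κ (1:F))) := by
      rw [LinearMap.sub_apply, LinearMap.smul_apply, hphi]
      rw [Theta_eq α i, Module.End.mul_apply, eraseOp_single, hc1, Gop_cons]
      rw [add_sub_cancel_right]
      rw [Theta_eq α r, Module.End.mul_apply]
      rw [show (consOp r (Gop α i (Finsupp.single κ (1:F))) : Multiset ℕ →₀ F)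
            = (consOp r : Module.End F (Multiset ℕ →₀ F)) (Gop α i (Finsupp.single κ (1:F))) from rfl]
      rw [← Module.End.mul_apply, ← Module.End.mul_apply, mul_assoc, eraseOp_consOp, mul_one]
    have hrhs1 : ThetaOp α i ((ThetaOp α r - (α * (i : F)) • PhiOp i r :
          (Multiset ℕ →₀ F) →ₗ[F] (Multiset ℕ →₀ F)) (Finsupp.single lam (1 : F)))
        = Gop α i (Gop α r (Finsupp.single κ (1:F))) := by
      rw [LinearMap.sub_apply, LinearMap.smul_apply, hphi]
      rw [Theta_eq α r, Module.End.mul_apply, eraseOp_single, hc2, Gop_cons]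
      rw [show r + i - 1 = i + r - 1 from by omega]
      rw [add_sub_cancel_right]
      rw [Theta_eq α i, Module.End.mul_apply]
      rw [show (consOp i (Gop α r (Finsupp.single κ (1:F))) : Multiset ℕ →₀ F)
            = (consOp i : Module.End F (Multiset ℕ →₀ F)) (Gop α r (Finsupp.single κ (1:F))) from rfl]
      rw [← Module.End.mul_apply, ← Module.End.mul_apply, mul_assoc, eraseOp_consOp, mul_one]
    have hrhs2 : ThetaOp α (i + r - 1) (PhiOp i r (Finsupp.single lam (1:F)))
        = Gop α (i + r - 1) (Finsupp.single κ (1:F)) := by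
      rw [hphi, Theta_eq α (i + r - 1), Module.End.mul_apply, eraseOp_single,
        Multiset.erase_cons_head]
    rw [hlhs, hrhs1, hrhs2, ← Module.End.mul_apply, ← Module.End.mul_apply,
      Gcomm α hi hr, LinearMap.add_apply, LinearMap.smul_apply]

end
end
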